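/- arXiv:1805.06302 — 4 statements merged into one kernel-verified Lean document; each statement's English description precedes it below -/
import Mathlib

section
/- Let Γ be a labeled graph that is a tree with all white vertices of genus 0, and let Γ1 be obtained from Γ by performing operation O1 at a white vertex of Γ. If G(Γ) is the trivial group, then G(Γ1) is the trivial group; in particular, operation O1 does not change the associated group of a labeled graph whose associated group is trivial. -/
namespace Stratifold

/-- A **labeled graph**: a finite bipartite multigraph whose vertices (named by natural
numbers) are partitioned into black and white vertices, every edge (also named by a
natural number) joining a black vertex to a white vertex and carrying a positive integer
label, and every white vertex carrying an integer genus. -/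
structure LGraph where
  blacks : Finset ℕ
  whites : Finset ℕ
  edges : Finset ℕ
  bEnd : ℕ → ℕ
  wEnd : ℕ → ℕ
  label : ℕ → ℕ
  genus : ℕ → ℤ
  disj : Disjoint blacks whites
  bEnd_mem : ∀ e ∈ edges, bEnd e ∈ blacks
  wEnd_mem : ∀ e ∈ edges, wEnd e ∈ whites
  label_pos : ∀ e ∈ edges, 0 < label e

namespace LGraph

/-- The set of all vertices of a labeled graph. -/
def Verts (G : LGraph) : Finset ℕ := G.blacks ∪ G.whites

/-- The edges incident to a vertex. -/
def IncidentEdges (G : LGraph) (v : ℕ) : Finset ℕ :=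
  G.edges.filter fun e => G.bEnd e = v ∨ G.wEnd e = v

/-- The degree of a vertex. -/
def deg (G : LGraph) (v : ℕ) : ℕ := (G.IncidentEdges v).card

/-- Adjacency: two vertices joined by some edge. -/
def Adj (G : LGraph) (u v : ℕ) : Prop :=
  ∃ e ∈ G.edges, (G.bEnd e = u ∧ G.wEnd e = v) ∨ (G.bEnd e = v ∧ G.wEnd e = u)

/-- Reachability by a path of edges. -/
def Reach (G : LGraph) : ℕ → ℕ → Prop := Relation.ReflTransGen G.Adj

/-- The graph is connected (and nonempty). -/
def Connected (G : LGraph) : Prop :=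
  G.Verts.Nonempty ∧ ∀ u ∈ G.Verts, ∀ v ∈ G.Verts, G.Reach u v

/-- A (multi)graph is a tree iff it is connected and has exactly one more vertex
than it has edges. -/
def IsTree (G : LGraph) : Prop := G.Connected ∧ G.edges.card + 1 = G.Verts.card

/-- Trivalent: for every black vertex, the labels of its incident edges sum to `3`. -/
def Trivalent (G : LGraph) : Prop :=
  ∀ b ∈ G.blacks, ∑ e ∈ G.IncidentEdges b, G.label e = 3

/-- All white vertices have genus `0`. -/
def WhitesGenusZero (G : LGraph) : Prop := ∀ w ∈ G.whites, G.genus w = 0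

/-- All terminal (degree-one) vertices are white. -/
def TerminalsWhite (G : LGraph) : Prop := ∀ v ∈ G.blacks, G.deg v ≠ 1

/-- The relator associated to a white vertex `w`: the product
`b(e₁)^{r(e₁)} ⋯ b(eₚ)^{r(eₚ)}` over the edges `e₁ < ⋯ < eₚ` incident to `w`
(in the chosen linear order of the edge names), where `b(e)` is the black endpoint
of `e` and `r(e)` its label. -/
def relator (G : LGraph) (w : ℕ) : FreeGroup {b : ℕ // b ∈ G.blacks} :=
  (((G.edges.filter fun e => G.wEnd e = w).sort (· ≤ ·)).map fun e =>
    if h : G.bEnd e ∈ G.blacks then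
      FreeGroup.of (⟨G.bEnd e, h⟩ : {b : ℕ // b ∈ G.blacks}) ^ G.label e
    else 1).prod

/-- The set of relators of `G`: one for each white vertex. -/
def rels (G : LGraph) : Set (FreeGroup {b : ℕ // b ∈ G.blacks}) :=
  {r | ∃ w ∈ G.whites, r = G.relator w}

/-- The group associated to a labeled graph which is a tree with all white vertices of
genus 0: one generator for each black vertex, one relation for each white vertex. -/
abbrev Grp (G : LGraph) : Type := PresentedGroup G.rels

/-- The generator of `Grp G` corresponding to a black vertex `b`. -/
def gen (G : LGraph) (b : ℕ) (h : b ∈ G.blacks) : G.Grp := PresentedGroup.of ⟨b, h⟩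

/-- `G` is the labeled graph consisting of a single white vertex `w` of genus `0`. -/
def IsSingleWhite (G : LGraph) (w : ℕ) : Prop :=
  G.whites = {w} ∧ G.blacks = ∅ ∧ G.edges = ∅ ∧ G.genus w = 0

/-- `G` is a `b111`-tree: one black vertex joined by three edges of label `1` to three
white vertices of genus `0`. -/
def IsB111 (G : LGraph) : Prop :=
  ∃ b w₁ w₂ w₃ e₁ e₂ e₃ : ℕ,
    G.blacks = {b} ∧ G.whites = {w₁, w₂, w₃} ∧
    w₁ ≠ w₂ ∧ w₁ ≠ w₃ ∧ w₂ ≠ w₃ ∧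
    G.edges = {e₁, e₂, e₃} ∧ e₁ ≠ e₂ ∧ e₁ ≠ e₃ ∧ e₂ ≠ e₃ ∧
    G.bEnd e₁ = b ∧ G.bEnd e₂ = b ∧ G.bEnd e₃ = b ∧
    G.wEnd e₁ = w₁ ∧ G.wEnd e₂ = w₂ ∧ G.wEnd e₃ = w₃ ∧
    G.label e₁ = 1 ∧ G.label e₂ = 1 ∧ G.label e₃ = 1 ∧
    G.genus w₁ = 0 ∧ G.genus w₂ = 0 ∧ G.genus w₃ = 0

/-- Operation `O1` performed at the white vertex `w` of `G`, producing `G'`: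
the edges incident to `w` are split into two (possibly empty) sets `E₀` and its
complement; `w` is replaced by two white vertices `w₀`, `w₁` of genus `0` (the edges of
`E₀` reattached to `w₀`, the others to `w₁`); a new black vertex `b` and a new terminal
white vertex `w₂` of genus `0` are added, together with three new edges of label `1`
joining `b` to `w₀`, to `w₁` and to `w₂`. -/
def O1At (G G' : LGraph) (w : ℕ) : Prop :=
  w ∈ G.whites ∧
  ∃ (E₀ : Finset ℕ) (w₀ w₁ w₂ b f₀ f₁ f₂ : ℕ),
    E₀ ⊆ G.edges.filter (fun e => G.wEnd e = w) ∧
    w₀ ∉ G.Verts ∧ w₁ ∉ G.Verts ∧ w₂ ∉ G.Verts ∧ b ∉ G.Verts ∧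
    w₀ ≠ w₁ ∧ w₀ ≠ w₂ ∧ w₁ ≠ w₂ ∧ b ≠ w₀ ∧ b ≠ w₁ ∧ b ≠ w₂ ∧
    f₀ ∉ G.edges ∧ f₁ ∉ G.edges ∧ f₂ ∉ G.edges ∧ f₀ ≠ f₁ ∧ f₀ ≠ f₂ ∧ f₁ ≠ f₂ ∧
    G'.blacks = insert b G.blacks ∧
    G'.whites = insert w₀ (insert w₁ (insert w₂ (G.whites.erase w))) ∧
    G'.edges = insert f₀ (insert f₁ (insert f₂ G.edges)) ∧
    (∀ e ∈ G.edges, G'.bEnd e = G.bEnd e ∧ G'.label e = G.label e) ∧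
    (∀ e ∈ G.edges, G'.wEnd e =
      if G.wEnd e = w then (if e ∈ E₀ then w₀ else w₁) else G.wEnd e) ∧
    G'.bEnd f₀ = b ∧ G'.bEnd f₁ = b ∧ G'.bEnd f₂ = b ∧
    G'.wEnd f₀ = w₀ ∧ G'.wEnd f₁ = w₁ ∧ G'.wEnd f₂ = w₂ ∧
    G'.label f₀ = 1 ∧ G'.label f₁ = 1 ∧ G'.label f₂ = 1 ∧
    (∀ v ∈ G.whites.erase w, G'.genus v = G.genus v) ∧
    G'.genus w₀ = 0 ∧ G'.genus w₁ = 0 ∧ G'.genus w₂ = 0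

/-- Operation `O1` performed at some white vertex. -/
def O1Step (G G' : LGraph) : Prop := ∃ w, O1At G G' w

/-- Operation `O2` performed at the white vertex `w` of `G`, producing `G'`: a new black
vertex `b` and a new terminal white vertex `w'` of genus `0` are added, together with an
edge of label `2` joining `w` to `b` and an edge of label `1` joining `b` to `w'`. -/
def O2At (G G' : LGraph) (w : ℕ) : Prop :=
  w ∈ G.whites ∧
  ∃ (b w' f₁ f₂ : ℕ),
    b ∉ G.Verts ∧ w' ∉ G.Verts ∧ b ≠ w' ∧
    f₁ ∉ G.edges ∧ f₂ ∉ G.edges ∧ f₁ ≠ f₂ ∧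
    G'.blacks = insert b G.blacks ∧
    G'.whites = insert w' G.whites ∧
    G'.edges = insert f₁ (insert f₂ G.edges) ∧
    (∀ e ∈ G.edges, G'.bEnd e = G.bEnd e ∧ G'.wEnd e = G.wEnd e ∧ G'.label e = G.label e) ∧
    G'.bEnd f₁ = b ∧ G'.wEnd f₁ = w ∧ G'.label f₁ = 2 ∧
    G'.bEnd f₂ = b ∧ G'.wEnd f₂ = w' ∧ G'.label f₂ = 1 ∧
    (∀ v ∈ G.whites, G'.genus v = G.genus v) ∧
    G'.genus w' = 0

/-- Operation `O2` performed at some white vertex. -/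
def O2Step (G G' : LGraph) : Prop := ∃ w, O2At G G' w

/-- Two labeled graphs are disjoint: no common vertices and no common edges. -/
def DisjGraphs (G₁ G₂ : LGraph) : Prop :=
  Disjoint G₁.Verts G₂.Verts ∧ Disjoint G₁.edges G₂.edges

/-- Operation `O1*` on disjoint labeled graphs `G₁`, `G₂` with chosen white vertices
`w₁ ∈ G₁`, `w₂ ∈ G₂`, producing `G'`: a new black vertex `b` and a new terminal white
vertex `w` of genus `0` are added, together with three new edges of label `1` joining
`b` to `w₁`, to `w₂` and to `w`. -/
def O1StarAt (G₁ G₂ G' : LGraph) (w₁ w₂ : ℕ) : Prop :=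
  DisjGraphs G₁ G₂ ∧ w₁ ∈ G₁.whites ∧ w₂ ∈ G₂.whites ∧
  ∃ (b w f₀ f₁ f₂ : ℕ),
    b ∉ G₁.Verts ∪ G₂.Verts ∧ w ∉ G₁.Verts ∪ G₂.Verts ∧ b ≠ w ∧
    f₀ ∉ G₁.edges ∪ G₂.edges ∧ f₁ ∉ G₁.edges ∪ G₂.edges ∧ f₂ ∉ G₁.edges ∪ G₂.edges ∧
    f₀ ≠ f₁ ∧ f₀ ≠ f₂ ∧ f₁ ≠ f₂ ∧
    G'.blacks = insert b (G₁.blacks ∪ G₂.blacks) ∧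
    G'.whites = insert w (G₁.whites ∪ G₂.whites) ∧
    G'.edges = insert f₀ (insert f₁ (insert f₂ (G₁.edges ∪ G₂.edges))) ∧
    (∀ e ∈ G₁.edges, G'.bEnd e = G₁.bEnd e ∧ G'.wEnd e = G₁.wEnd e ∧ G'.label e = G₁.label e) ∧
    (∀ e ∈ G₂.edges, G'.bEnd e = G₂.bEnd e ∧ G'.wEnd e = G₂.wEnd e ∧ G'.label e = G₂.label e) ∧
    G'.bEnd f₀ = b ∧ G'.wEnd f₀ = w₁ ∧ G'.label f₀ = 1 ∧
    G'.bEnd f₁ = b ∧ G'.wEnd f₁ = w₂ ∧ G'.label f₁ = 1 ∧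
    G'.bEnd f₂ = b ∧ G'.wEnd f₂ = w ∧ G'.label f₂ = 1 ∧
    (∀ v ∈ G₁.whites, G'.genus v = G₁.genus v) ∧
    (∀ v ∈ G₂.whites, G'.genus v = G₂.genus v) ∧
    G'.genus w = 0

end LGraph

open LGraph

/-- `𝒢`: the smallest class of labeled graphs containing the graph consisting of a single
white vertex of genus `0` and closed under operations `O1`, `O2` (at any white vertex of
a member) and `O1*` (joining any two disjoint members at any white vertices). -/
inductive InG : LGraph → Prop
  | single (G : LGraph) (w : ℕ) : IsSingleWhite G w → InG G
  | o1 (G G' : LGraph) (w : ℕ) : InG G → O1At G G' w → InG G'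
  | o2 (G G' : LGraph) (w : ℕ) : InG G → O2At G G' w → InG G'
  | o1star (G₁ G₂ G' : LGraph) (w₁ w₂ : ℕ) :
      InG G₁ → InG G₂ → O1StarAt G₁ G₂ G' w₁ w₂ → InG G'

namespace LGraph

/-- The induced labeled subgraph on a set `S` of vertices. -/
def induce (G : LGraph) (S : Finset ℕ) : LGraph where
  blacks := G.blacks ∩ S
  whites := G.whites ∩ S
  edges := G.edges.filter fun e => G.bEnd e ∈ S ∧ G.wEnd e ∈ S
  bEnd := G.bEnd
  wEnd := G.wEnd
  label := G.label
  genus := G.genus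
  disj := G.disj.mono Finset.inter_subset_left Finset.inter_subset_left
  bEnd_mem := fun e he => by
    rw [Finset.mem_filter] at he
    exact Finset.mem_inter.2 ⟨G.bEnd_mem e he.1, he.2.1⟩
  wEnd_mem := fun e he => by
    rw [Finset.mem_filter] at he
    exact Finset.mem_inter.2 ⟨G.wEnd_mem e he.1, he.2.2⟩
  label_pos := fun e he => G.label_pos e (Finset.mem_filter.1 he).1

/-- `B`: the set of black vertices of degree `3`. -/
def bigB (G : LGraph) : Finset ℕ := G.blacks.filter fun b => G.deg b = 3

/-- `Γ − st(B)`: the graph obtained by removing the black vertices of degree `3`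
together with all edges incident to them. -/
def minusStB (G : LGraph) : LGraph := G.induce (G.Verts \ G.bigB)

/-- `St(B)`: the closed star of the set `B` of black vertices of degree `3`, i.e. the
vertices of `B`, the edges incident to them, and the white endpoints of those edges. -/
def closedStar (G : LGraph) : LGraph where
  blacks := G.bigB
  whites := G.whites.filter fun w => ∃ e ∈ G.edges, G.bEnd e ∈ G.bigB ∧ G.wEnd e = w
  edges := G.edges.filter fun e => G.bEnd e ∈ G.bigB
  bEnd := G.bEnd
  wEnd := G.wEnd
  label := G.label
  genus := G.genus
  disj := G.disj.mono (Finset.filter_subset _ _) (Finset.filter_subset _ _)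
  bEnd_mem := fun e he => (Finset.mem_filter.1 he).2
  wEnd_mem := fun e he => by
    rw [Finset.mem_filter] at he
    exact Finset.mem_filter.2
      ⟨G.wEnd_mem e he.1, ⟨e, he.1, he.2, rfl⟩⟩
  label_pos := fun e he => G.label_pos e (Finset.mem_filter.1 he).1

open Classical in
/-- The connected component of a vertex `v` in `G`, as a labeled graph. -/
noncomputable def component (G : LGraph) (v : ℕ) : LGraph :=
  G.induce (G.Verts.filter fun u => G.Reach u v)

/-- `C` is a `(2,1)`-collapsible tree with root `r`: it is obtained from the labeled
graph consisting of the single white vertex `r` of genus `0` by repeatedly attaching,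
at a white vertex `u`, a new black vertex `b` joined to `u` by an edge of label `2` and
to a new terminal white vertex by an edge of label `1` (i.e. by repeatedly performing
operation `O2`).  This is exactly the barycentric subdivision of a tree rooted at `r`,
with barycenters colored black, an edge labeled `2` precisely when its distance to the
root is even, and `1` when it is odd. -/
def IsCollapsible (C : LGraph) (r : ℕ) : Prop :=
  ∃ C₀ : LGraph, IsSingleWhite C₀ r ∧ Relation.ReflTransGen O2Step C₀ C

open Classical in
/-- The white vertices of `St(B)` that are not the root of the `(2,1)`-collapsible
component of `Γ − st(B)` containing them. -/
noncomputable def notRootWhites (G : LGraph) : Finset ℕ :=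
  G.closedStar.whites.filter fun w => ¬ IsCollapsible ((G.minusStB).component w) w

/-- `R` is the reduced graph `R(G)`: it is obtained from the closed star `St(B)` by
attaching to each white vertex `w` of `St(B)` that is not a root a `b12`-tree, i.e. a
new black vertex joined to `w` by an edge of label `1` and to a new terminal white
vertex of genus `0` by an edge of label `2`. -/
def IsReduced (G R : LGraph) : Prop :=
  ∃ nb nw ne₁ ne₂ : ℕ → ℕ,
    (∀ w ∈ G.notRootWhites,
      nb w ∉ G.Verts ∧ nw w ∉ G.Verts ∧ nb w ≠ nw w ∧
      ne₁ w ∉ G.edges ∧ ne₂ w ∉ G.edges ∧ ne₁ w ≠ ne₂ w) ∧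
    (∀ w ∈ G.notRootWhites, ∀ w' ∈ G.notRootWhites, w ≠ w' →
      nb w ≠ nb w' ∧ nb w ≠ nw w' ∧ nw w ≠ nw w' ∧
      ne₁ w ≠ ne₁ w' ∧ ne₁ w ≠ ne₂ w' ∧ ne₂ w ≠ ne₂ w') ∧
    R.blacks = G.closedStar.blacks ∪ G.notRootWhites.image nb ∧
    R.whites = G.closedStar.whites ∪ G.notRootWhites.image nw ∧
    R.edges = G.closedStar.edges ∪ G.notRootWhites.image ne₁ ∪ G.notRootWhites.image ne₂ ∧
    (∀ e ∈ G.closedStar.edges, R.bEnd e = G.bEnd e ∧ R.wEnd e = G.wEnd e ∧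
      R.label e = G.label e) ∧
    (∀ w ∈ G.closedStar.whites, R.genus w = G.genus w) ∧
    (∀ w ∈ G.notRootWhites,
      R.bEnd (ne₁ w) = nb w ∧ R.wEnd (ne₁ w) = w ∧ R.label (ne₁ w) = 1 ∧
      R.bEnd (ne₂ w) = nb w ∧ R.wEnd (ne₂ w) = nw w ∧ R.label (ne₂ w) = 2 ∧
      R.genus (nw w) = 0)

/-- `H` is a horned tree: the bicolored labeled tree obtained from a tree `T` with at
least two edges, all of whose nonterminal vertices have degree `3`, by coloring
degree-1 vertices white (genus `0`) and degree-3 vertices black, trisecting terminal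
edges and bisecting nonterminal edges (coloring the new vertices black exactly when
they neighbor a terminal vertex), and labeling terminal edges `2` and all other edges
`1`.  Equivalently (intrinsically): `H` is a tree with all whites of genus `0`; at
least one black vertex has degree `3`; every terminal vertex is white and its edge has
label `2`; every nonterminal white vertex has degree `2` with both incident labels `1`;
and every black vertex either has degree `3` with all incident labels `1`, or has
degree `2` with one incident edge of label `2` leading to a terminal white vertex and
the other of label `1`. -/
def IsHornedTree (H : LGraph) : Prop :=
  H.IsTree ∧ H.WhitesGenusZero ∧
  (∃ b ∈ H.blacks, H.deg b = 3) ∧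
  H.TerminalsWhite ∧
  (∀ w ∈ H.whites, H.deg w = 1 → ∀ e ∈ H.IncidentEdges w, H.label e = 2) ∧
  (∀ w ∈ H.whites, H.deg w ≠ 1 → H.deg w = 2 ∧ ∀ e ∈ H.IncidentEdges w, H.label e = 1) ∧
  (∀ b ∈ H.blacks,
    (H.deg b = 3 ∧ ∀ e ∈ H.IncidentEdges b, H.label e = 1) ∨
    (H.deg b = 2 ∧ ∃ e₁ ∈ H.IncidentEdges b, ∃ e₂ ∈ H.IncidentEdges b, e₁ ≠ e₂ ∧
      H.label e₁ = 2 ∧ H.label e₂ = 1 ∧ H.deg (H.wEnd e₁) = 1))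

/-- `H` is a (labeled bipartite) subgraph of `G`. -/
def IsSubgraph (H G : LGraph) : Prop :=
  H.blacks ⊆ G.blacks ∧ H.whites ⊆ G.whites ∧ H.edges ⊆ G.edges ∧
  (∀ e ∈ H.edges, H.bEnd e = G.bEnd e ∧ H.wEnd e = G.wEnd e ∧ H.label e = G.label e) ∧
  ∀ w ∈ H.whites, H.genus w = G.genus w

end LGraph

end Stratifold

open Stratifold Stratifold.LGraph

section AuxHelpers

variable {M : Type*} [Monoid M]

private lemma prod_map_filter_eq' (g : ℕ → M) (p : ℕ → Prop) [DecidablePred p] :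
    ∀ l : List ℕ, (∀ e ∈ l, ¬ p e → g e = 1) →
      (l.map g).prod = ((l.filter fun e => decide (p e)).map g).prod := by
  intro l
  induction l with
  | nil => simp
  | cons a l ih =>
    intro h
    have ih' := ih fun e he hne => h e (List.mem_cons_of_mem _ he) hne
    by_cases hp : p a
    · simp [List.filter_cons, hp, ih']
    · simp [List.filter_cons, hp, h a List.mem_cons_self hp, ih']

private lemma sort_filter_subset' (A B : Finset ℕ) (hAB : A ⊆ B) :
    ((B.sort (· ≤ ·)).filter fun e => decide (e ∈ A)) = A.sort (· ≤ ·) := by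
  refine List.Perm.eq_of_pairwise' ((Finset.pairwise_sort B (· ≤ ·)).filter _)
    (Finset.pairwise_sort A (· ≤ ·)) ?_
  apply Multiset.coe_eq_coe.mp
  rw [← Multiset.filter_coe, Finset.sort_eq, Finset.sort_eq, ← Finset.filter_val,
    Finset.filter_mem_eq_inter, Finset.inter_eq_right.mpr hAB]

lemma prod_sort_subset (g : ℕ → M) (A B : Finset ℕ) (hAB : A ⊆ B)
    (h1 : ∀ e ∈ B, e ∉ A → g e = 1) :
    ((B.sort (· ≤ ·)).map g).prod = ((A.sort (· ≤ ·)).map g).prod := by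
  rw [prod_map_filter_eq' g (· ∈ A) _
    (fun e he hne => h1 e (Finset.mem_sort (· ≤ ·) |>.mp he) hne),
    sort_filter_subset' A B hAB]

lemma reflTransGen_lift' {α : Type*} {r s : α → α → Prop}
    (h : ∀ u v, r u v → Relation.ReflTransGen s u v) {a b : α}
    (hab : Relation.ReflTransGen r a b) : Relation.ReflTransGen s a b := by
  induction hab with
  | refl => exact .refl
  | tail _ hr ih => exact ih.trans (h _ _ hr)

end AuxHelpers

namespace Stratifold.LGraph

def delE (G : LGraph) (e₁ : ℕ) : LGraph where
  blacks := G.blacks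
  whites := G.whites
  edges := G.edges.erase e₁
  bEnd := G.bEnd
  wEnd := G.wEnd
  label := G.label
  genus := G.genus
  disj := G.disj
  bEnd_mem := fun e he => G.bEnd_mem e (Finset.mem_of_mem_erase he)
  wEnd_mem := fun e he => G.wEnd_mem e (Finset.mem_of_mem_erase he)
  label_pos := fun e he => G.label_pos e (Finset.mem_of_mem_erase he)

lemma adj_symm (G : LGraph) : Symmetric G.Adj := by
  rintro u v ⟨e, he, h | h⟩
  · exact ⟨e, he, Or.inr h⟩
  · exact ⟨e, he, Or.inl h⟩

lemma reach_symm (G : LGraph) : Symmetric G.Reach :=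
  by haveI : Std.Symm G.Adj := ⟨G.adj_symm⟩; exact fun a c h => (inferInstance : Std.Symm (Relation.ReflTransGen G.Adj)).symm a c h

lemma adj_mem_verts (G : LGraph) {u v : ℕ} (h : G.Adj u v) :
    u ∈ G.Verts ∧ v ∈ G.Verts := by
  obtain ⟨e, he, hor⟩ := h
  have hb : G.bEnd e ∈ G.Verts := Finset.mem_union_left _ (G.bEnd_mem e he)
  have hw : G.wEnd e ∈ G.Verts := Finset.mem_union_right _ (G.wEnd_mem e he)
  rcases hor with ⟨h1, h2⟩ | ⟨h1, h2⟩
  · exact ⟨h1 ▸ hb, h2 ▸ hw⟩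
  · exact ⟨h2 ▸ hw, h1 ▸ hb⟩

lemma connected_card_bound : ∀ n (G : LGraph), G.edges.card = n → G.Connected →
    G.Verts.card ≤ n + 1 := by
  intro n
  induction n using Nat.strong_induction_on with
  | _ n ih =>
    intro G hn hconn
    match n, hn with
    | 0, hn =>
      obtain ⟨⟨v₀, hv₀⟩, hreach⟩ := hconn
      have hE : G.edges = ∅ := Finset.card_eq_zero.mp hn
      have hsub : G.Verts ⊆ {v₀} := by
        intro u hu
        have hr := hreach u hu v₀ hv₀
        have : u = v₀ := by
          induction hr with
          | refl => rfl
          | tail _ hadj _ =>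
            obtain ⟨e, he, _⟩ := hadj
            simp [hE] at he
        simp [this]
      simpa using Finset.card_le_card hsub
    | (m+1), hn =>
      classical
      obtain ⟨e, he⟩ := Finset.card_pos.mp (by omega : 0 < G.edges.card)
      set G' := G.delE e with hG'def
      have hG'edges : G'.edges.card = m := by
        simp only [hG'def, delE, Finset.card_erase_of_mem he, hn]
        omega
      have hbV : G.bEnd e ∈ G.Verts := Finset.mem_union_left _ (G.bEnd_mem e he)
      have hwV : G.wEnd e ∈ G.Verts := Finset.mem_union_right _ (G.wEnd_mem e he)
      have hadj' : ∀ e', e' ∈ G.edges → e' ≠ e → ∀ u v,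
          ((G.bEnd e' = u ∧ G.wEnd e' = v) ∨ (G.bEnd e' = v ∧ G.wEnd e' = u)) →
          G'.Adj u v := fun e' he' hne u v hor =>
        ⟨e', Finset.mem_erase.mpr ⟨hne, he'⟩, hor⟩
      by_cases hcut : G'.Reach (G.wEnd e) (G.bEnd e)
      · have hconn' : G'.Connected := by
          refine ⟨hconn.1, fun u hu v hv => ?_⟩
          refine reflTransGen_lift' (fun a c hac => ?_) (hconn.2 u hu v hv)
          obtain ⟨e', he', hor⟩ := hac
          by_cases hee : e' = e
          · subst hee
            rcases hor with ⟨h1, h2⟩ | ⟨h1, h2⟩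
            · subst h1; subst h2; exact G'.reach_symm hcut
            · subst h1; subst h2; exact hcut
          · exact Relation.ReflTransGen.single ⟨e', Finset.mem_erase.mpr ⟨hee, he'⟩, hor⟩
        have := ih m (by omega) G' hG'edges hconn'
        have hVeq : G'.Verts = G.Verts := rfl
        rw [hVeq] at this
        omega
      · set S₁ := G.Verts.filter (fun u => G'.Reach u (G.bEnd e)) with hS₁def
        set S₂ := G.Verts \ S₁ with hS₂def
        have hS₁sub : S₁ ⊆ G.Verts := Finset.filter_subset _ _
        have hS₂sub : S₂ ⊆ G.Verts := Finset.sdiff_subset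
        have hmemS₁ : ∀ u, u ∈ S₁ ↔ u ∈ G.Verts ∧ G'.Reach u (G.bEnd e) := by
          intro u; simp [hS₁def]
        have hmemS₂ : ∀ u, u ∈ S₂ ↔ u ∈ G.Verts ∧ ¬ G'.Reach u (G.bEnd e) := by
          intro u; simp [hS₂def, hS₁def]; tauto
        have dichot : ∀ u, G.Reach u (G.bEnd e) →
            G'.Reach u (G.bEnd e) ∨ G'.Reach u (G.wEnd e) := by
          intro u hr
          induction hr using Relation.ReflTransGen.head_induction_on with
          | refl => exact Or.inl .refl
          | head hadj hrest ih2 =>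
            obtain ⟨e', he', hor⟩ := hadj
            by_cases hee : e' = e
            · subst hee
              rcases hor with ⟨h1, _⟩ | ⟨_, h2⟩
              · rw [← h1]; exact Or.inl .refl
              · rw [← h2]; exact Or.inr .refl
            · rcases ih2 with h | h
              · exact Or.inl (.head (hadj' e' he' hee _ _ hor) h)
              · exact Or.inr (.head (hadj' e' he' hee _ _ hor) h)
        have hS₁cl : ∀ u v, G'.Adj u v → v ∈ S₁ → u ∈ S₁ := by
          intro u v ha hv
          rw [hmemS₁] at hv ⊢
          exact ⟨(G'.adj_mem_verts ha).1, .head ha hv.2⟩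
        have hS₁cl2 : ∀ u v, G'.Adj u v → u ∈ S₁ → v ∈ S₁ :=
          fun u v ha hu => hS₁cl v u (G'.adj_symm ha) hu
        have hS₂cl : ∀ u v, G'.Adj u v → v ∈ S₂ → u ∈ S₂ := by
          intro u v ha hv
          rw [hmemS₂] at hv ⊢
          exact ⟨(G'.adj_mem_verts ha).1,
            fun hr => hv.2 (.head (G'.adj_symm ha) hr)⟩
        have hS₂cl2 : ∀ u v, G'.Adj u v → u ∈ S₂ → v ∈ S₂ :=
          fun u v ha hu => hS₂cl v u (G'.adj_symm ha) hu
        have hS₂reach : ∀ u ∈ S₂, G'.Reach u (G.wEnd e) := by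
          intro u hu
          rw [hmemS₂] at hu
          rcases dichot u (hconn.2 u hu.1 _ hbV) with h | h
          · exact absurd h hu.2
          · exact h
        set G₁ := G'.induce S₁ with hG₁def
        set G₂ := G'.induce S₂ with hG₂def
        have hV₁ : G₁.Verts = S₁ := by
          show (G.blacks ∩ S₁) ∪ (G.whites ∩ S₁) = S₁
          rw [← Finset.union_inter_distrib_right]
          exact Finset.inter_eq_right.mpr hS₁sub
        have hV₂ : G₂.Verts = S₂ := by
          show (G.blacks ∩ S₂) ∪ (G.whites ∩ S₂) = S₂
          rw [← Finset.union_inter_distrib_right]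
          exact Finset.inter_eq_right.mpr hS₂sub
        have hreachIn : ∀ (S : Finset ℕ) t, (∀ u v, G'.Adj u v → u ∈ S → v ∈ S) →
            ∀ u, G'.Reach u t → u ∈ S → (G'.induce S).Reach u t := by
          intro S t hcl u hr
          induction hr using Relation.ReflTransGen.head_induction_on with
          | refl => intro _; exact .refl
          | head ha hrest ih2 =>
            intro hu
            obtain ⟨e', he', hor⟩ := ha
            have hc := hcl _ _ ⟨e', he', hor⟩ hu
            refine .head ⟨e', Finset.mem_filter.mpr ⟨he', ?_⟩, hor⟩ (ih2 hc)
            rcases hor with ⟨h1, h2⟩ | ⟨h1, h2⟩ <;> rw [h1, h2]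
            · exact ⟨hu, hc⟩
            · exact ⟨hc, hu⟩
        have hG₁conn : G₁.Connected := by
          constructor
          · exact ⟨G.bEnd e, by rw [hV₁, hmemS₁]; exact ⟨hbV, .refl⟩⟩
          · intro u hu v hv
            rw [hV₁] at hu hv
            have h1 := hreachIn S₁ (G.bEnd e) hS₁cl2 u ((hmemS₁ u).mp hu).2 hu
            have h2 := hreachIn S₁ (G.bEnd e) hS₁cl2 v ((hmemS₁ v).mp hv).2 hv
            exact h1.trans (G₁.reach_symm h2)
        have hG₂conn : G₂.Connected := by
          constructor
          · exact ⟨G.wEnd e, by rw [hV₂, hmemS₂]; exact ⟨hwV, hcut⟩⟩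
          · intro u hu v hv
            rw [hV₂] at hu hv
            have h1 := hreachIn S₂ (G.wEnd e) hS₂cl2 u (hS₂reach u hu) hu
            have h2 := hreachIn S₂ (G.wEnd e) hS₂cl2 v (hS₂reach v hv) hv
            exact h1.trans (G₂.reach_symm h2)
        have hedgecl : ∀ e2 ∈ G'.edges,
            (G'.bEnd e2 ∈ S₁ ∧ G'.wEnd e2 ∈ S₁) ∨ (G'.bEnd e2 ∈ S₂ ∧ G'.wEnd e2 ∈ S₂) := by
          intro e2 he2
          have hadj : G'.Adj (G'.bEnd e2) (G'.wEnd e2) := ⟨e2, he2, Or.inl ⟨rfl, rfl⟩⟩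
          have hbv : G'.bEnd e2 ∈ G.Verts := Finset.mem_union_left _ (G'.bEnd_mem e2 he2)
          by_cases hb : G'.bEnd e2 ∈ S₁
          · exact Or.inl ⟨hb, hS₁cl2 _ _ hadj hb⟩
          · have hb2 : G'.bEnd e2 ∈ S₂ := (hmemS₂ _).mpr
              ⟨hbv, fun hr => hb ((hmemS₁ _).mpr ⟨hbv, hr⟩)⟩
            exact Or.inr ⟨hb2, hS₂cl2 _ _ hadj hb2⟩
        have hdisjS : Disjoint S₁ S₂ := Finset.disjoint_sdiff
        have hedisj : Disjoint G₁.edges G₂.edges := by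
          rw [Finset.disjoint_left]
          intro a ha hb
          rw [hG₁def] at ha; rw [hG₂def] at hb
          have ha2 := (Finset.mem_filter.mp ha).2.1
          have hb2 := (Finset.mem_filter.mp hb).2.1
          exact (Finset.disjoint_left.mp hdisjS) ha2 hb2
        have hecup : G₁.edges ∪ G₂.edges = G'.edges := by
          ext e2
          simp only [hG₁def, hG₂def, induce, Finset.mem_union, Finset.mem_filter]
          constructor
          · rintro (⟨h, _⟩ | ⟨h, _⟩) <;> exact h
          · intro h
            rcases hedgecl e2 h with h1 | h1
            · exact Or.inl ⟨h, h1⟩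
            · exact Or.inr ⟨h, h1⟩
        have hcards : G₁.edges.card + G₂.edges.card = m := by
          rw [← Finset.card_union_of_disjoint hedisj, hecup, hG'edges]
        have hb1 := ih G₁.edges.card (by omega) G₁ rfl hG₁conn
        have hb2 := ih G₂.edges.card (by omega) G₂ rfl hG₂conn
        rw [hV₁] at hb1
        rw [hV₂] at hb2
        have hcardV : S₁.card + S₂.card = G.Verts.card := by
          have h1 := Finset.card_sdiff_of_subset hS₁sub
          have h2 := Finset.card_le_card hS₁sub
          rw [hS₂def]
          omega
        omega

lemma tree_sep (G : LGraph) (hTree : G.IsTree) {w e₀ e₁ : ℕ}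
    (he₀ : e₀ ∈ G.edges) (he₁ : e₁ ∈ G.edges) (hne : e₀ ≠ e₁)
    (hw₀ : G.wEnd e₀ = w) (hw₁ : G.wEnd e₁ = w) :
    ¬ Relation.ReflTransGen (fun u v => G.Adj u v ∧ u ≠ w ∧ v ≠ w)
      (G.bEnd e₁) (G.bEnd e₀) := by
  intro hpath
  set G' := G.delE e₁ with hG'def
  have hstep : ∀ u v, (G.Adj u v ∧ u ≠ w ∧ v ≠ w) → G'.Adj u v := by
    rintro u v ⟨⟨e, he, hor⟩, hu, hv⟩
    refine ⟨e, Finset.mem_erase.mpr ⟨?_, he⟩, hor⟩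
    rintro rfl
    rcases hor with ⟨_, h2⟩ | ⟨_, h2⟩
    · exact hv (h2 ▸ hw₁)
    · exact hu (h2 ▸ hw₁)
  have hpath' : G'.Reach (G.bEnd e₁) (G.bEnd e₀) :=
    reflTransGen_lift' (fun u v h => Relation.ReflTransGen.single (hstep u v h)) hpath
  have hadj₀ : G'.Adj (G.bEnd e₀) w :=
    ⟨e₀, Finset.mem_erase.mpr ⟨hne, he₀⟩, Or.inl ⟨rfl, hw₀⟩⟩
  have hkey : G'.Reach (G.bEnd e₁) w := hpath'.tail hadj₀
  have hconn' : G'.Connected := by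
    refine ⟨hTree.1.1, fun u hu v hv => ?_⟩
    refine reflTransGen_lift' (fun a c hac => ?_) (hTree.1.2 u hu v hv)
    obtain ⟨e', he', hor⟩ := hac
    by_cases hee : e' = e₁
    · subst hee
      rcases hor with ⟨h1, h2⟩ | ⟨h1, h2⟩
      · rw [← h1, ← h2, hw₁]; exact hkey
      · rw [← h1, ← h2, hw₁]; exact G'.reach_symm hkey
    · exact Relation.ReflTransGen.single ⟨e', Finset.mem_erase.mpr ⟨hee, he'⟩, hor⟩
  have hbound := connected_card_bound G'.edges.card G' rfl hconn'
  have hVeq : G'.Verts = G.Verts := rfl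
  have hc1 : G'.edges.card = G.edges.card - 1 := by
    rw [hG'def]; exact Finset.card_erase_of_mem he₁
  have hpos : 0 < G.edges.card := Finset.card_pos.mpr ⟨e₁, he₁⟩
  have htc := hTree.2
  rw [hVeq] at hbound
  omega

lemma relator_map (G : LGraph) {H : Type*} [Group H]
    (φ : FreeGroup {x // x ∈ G.blacks} →* H) (w' : ℕ) :
    φ (G.relator w') =
      (((G.edges.filter fun e => G.wEnd e = w').sort (· ≤ ·)).map
        (fun e => if h : G.bEnd e ∈ G.blacks
          then (φ (FreeGroup.of ⟨G.bEnd e, h⟩)) ^ G.label e else 1)).prod := by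
  rw [relator, map_list_prod, List.map_map]
  refine congrArg List.prod (List.map_congr_left fun e _ => ?_)
  by_cases h : G.bEnd e ∈ G.blacks
  · simp [h]
  · simp [h]

lemma relator_one (G : LGraph) {w' : ℕ} (h : w' ∈ G.whites) :
    PresentedGroup.mk G.rels (G.relator w') = 1 :=
  (QuotientGroup.eq_one_iff _).mpr (Subgroup.subset_normalClosure ⟨w', h, rfl⟩)

end Stratifold.LGraph


/-- If `Γ` is a labeled graph which is a tree with all white vertices of genus `0`, and
`Γ₁` is obtained from `Γ` by operation `O1` at a white vertex of `Γ`, then triviality of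
`G(Γ)` implies triviality of `G(Γ₁)`: operation `O1` does not change the associated
group of a labeled graph whose associated group is trivial. -/
theorem O1_preserves_trivial (Γ Γ₁ : LGraph) (w : ℕ)
    (hTree : Γ.IsTree) (hGenus : Γ.WhitesGenusZero)
    (hO1 : O1At Γ Γ₁ w)
    (hTriv : ∀ x : Γ.Grp, x = 1) :
    ∀ x : Γ₁.Grp, x = 1 := by
    classical
  obtain ⟨hw, E₀, w₀, w₁, w₂, b, f₀, f₁, f₂, hE₀sub, hw₀V, hw₁V, hw₂V, hbV,
    hww1, hww2, hw12, hbw0, hbw1, hbw2, hf₀, hf₁, hf₂, hf01, hf02, hf12,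
    hblacks, hwhites, hedges, hold, holdw, hbf0, hbf1, hbf2, hwe0, hwe1, hwe2,
    hl0, hl1, hl2, hgold, hg0, hg1, hg2⟩ := hO1
  have hsubB : Γ.blacks ⊆ Γ₁.blacks := by
    rw [hblacks]; exact Finset.subset_insert _ _
  have hbB : b ∈ Γ₁.blacks := by rw [hblacks]; exact Finset.mem_insert_self _ _
  have hwmem₀ : w₀ ∈ Γ₁.whites := by rw [hwhites]; exact Finset.mem_insert_self _ _
  have hwmem₁ : w₁ ∈ Γ₁.whites := by
    rw [hwhites]; exact Finset.mem_insert_of_mem (Finset.mem_insert_self _ _)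
  have hwmem₂ : w₂ ∈ Γ₁.whites := by
    rw [hwhites]
    exact Finset.mem_insert_of_mem (Finset.mem_insert_of_mem (Finset.mem_insert_self _ _))
  have hwmemOld : ∀ w' ∈ Γ.whites, w' ≠ w → w' ∈ Γ₁.whites := by
    intro w' hw' hne
    rw [hwhites]
    exact Finset.mem_insert_of_mem (Finset.mem_insert_of_mem
      (Finset.mem_insert_of_mem (Finset.mem_erase.mpr ⟨hne, hw'⟩)))
  have hE₀E : E₀ ⊆ Γ.edges := fun e he => (Finset.mem_filter.mp (hE₀sub he)).1
  have hE₀w : ∀ e ∈ E₀, Γ.wEnd e = w := fun e he => (Finset.mem_filter.mp (hE₀sub he)).2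
  have hwEndV : ∀ e ∈ Γ.edges, Γ.wEnd e ∈ Γ.Verts :=
    fun e he => Finset.mem_union_right _ (Γ.wEnd_mem e he)
  have hBW : ∀ x ∈ Γ.blacks, x ≠ w := by
    intro x hx hxw
    exact (Finset.disjoint_left.mp Γ.disj hx) (hxw ▸ hw)
  have hmemE₁ : ∀ e, e ∈ Γ₁.edges ↔ e = f₀ ∨ e = f₁ ∨ e = f₂ ∨ e ∈ Γ.edges := by
    intro e; simp [hedges]
  have hfw₂ : Γ₁.edges.filter (fun e => Γ₁.wEnd e = w₂) = {f₂} := by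
    ext e
    simp only [Finset.mem_filter, Finset.mem_singleton, hmemE₁ e]
    constructor
    · rintro ⟨(rfl | rfl | rfl | he), hwe⟩
      · rw [hwe0] at hwe; exact absurd hwe hww2
      · rw [hwe1] at hwe; exact absurd hwe hw12
      · rfl
      · exfalso
        rw [holdw e he] at hwe
        split_ifs at hwe with h1 h2
        · exact hww2 hwe
        · exact hw12 hwe
        · exact hw₂V (hwe ▸ hwEndV e he)
    · rintro rfl
      exact ⟨Or.inr (Or.inr (Or.inl rfl)), hwe2⟩
  have hfw₀ : Γ₁.edges.filter (fun e => Γ₁.wEnd e = w₀) = insert f₀ E₀ := by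
    ext e
    simp only [Finset.mem_filter, Finset.mem_insert, hmemE₁ e]
    constructor
    · rintro ⟨(rfl | rfl | rfl | he), hwe⟩
      · exact Or.inl rfl
      · rw [hwe1] at hwe; exact absurd hwe.symm hww1
      · rw [hwe2] at hwe; exact absurd hwe.symm hww2
      · rw [holdw e he] at hwe
        split_ifs at hwe with h1 h2
        · exact Or.inr h2
        · exact absurd hwe.symm hww1
        · exact absurd (hwe ▸ hwEndV e he) hw₀V
    · rintro (rfl | he)
      · exact ⟨Or.inl rfl, hwe0⟩
      · refine ⟨Or.inr (Or.inr (Or.inr (hE₀E he))), ?_⟩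
        rw [holdw e (hE₀E he), if_pos (hE₀w e he), if_pos he]
  have hfw₁ : Γ₁.edges.filter (fun e => Γ₁.wEnd e = w₁)
      = insert f₁ ((Γ.edges.filter fun e => Γ.wEnd e = w) \ E₀) := by
    ext e
    simp only [Finset.mem_filter, Finset.mem_insert, Finset.mem_sdiff,
      Finset.mem_filter, hmemE₁ e]
    constructor
    · rintro ⟨(rfl | rfl | rfl | he), hwe⟩
      · rw [hwe0] at hwe; exact absurd hwe hww1
      · exact Or.inl rfl
      · rw [hwe2] at hwe; exact absurd hwe.symm hw12
      · rw [holdw e he] at hwe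
        split_ifs at hwe with h1 h2
        · exact absurd hwe hww1
        · exact Or.inr ⟨⟨he, h1⟩, h2⟩
        · exact absurd (hwe ▸ hwEndV e he) hw₁V
    · rintro (rfl | ⟨⟨he, hwe⟩, hne⟩)
      · exact ⟨Or.inr (Or.inl rfl), hwe1⟩
      · refine ⟨Or.inr (Or.inr (Or.inr he)), ?_⟩
        rw [holdw e he, if_pos hwe, if_neg hne]
  have hfold : ∀ w' ∈ Γ.whites, w' ≠ w →
      Γ₁.edges.filter (fun e => Γ₁.wEnd e = w')
        = Γ.edges.filter (fun e => Γ.wEnd e = w') := by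
    intro w' hw' hne
    have hw'V : w' ∈ Γ.Verts := Finset.mem_union_right _ hw'
    ext e
    simp only [Finset.mem_filter, hmemE₁ e]
    constructor
    · rintro ⟨(rfl | rfl | rfl | he), hwe⟩
      · rw [hwe0] at hwe; exact absurd (hwe ▸ hw'V) hw₀V
      · rw [hwe1] at hwe; exact absurd (hwe ▸ hw'V) hw₁V
      · rw [hwe2] at hwe; exact absurd (hwe ▸ hw'V) hw₂V
      · rw [holdw e he] at hwe
        split_ifs at hwe with h1 h2
        · exact absurd (hwe ▸ hw'V) hw₀V
        · exact absurd (hwe ▸ hw'V) hw₁V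
        · exact ⟨he, hwe⟩
    · rintro ⟨he, hwe⟩
      refine ⟨Or.inr (Or.inr (Or.inr he)), ?_⟩
      rw [holdw e he, if_neg (by rw [hwe]; exact hne), hwe]
  set S0 : ℕ → Prop := fun u => ∃ e ∈ E₀,
    Relation.ReflTransGen (fun a c => Γ.Adj a c ∧ a ≠ w ∧ c ≠ w) u (Γ.bEnd e) with hS0def
  have hS0mem : ∀ e ∈ E₀, S0 (Γ.bEnd e) := fun e he => ⟨e, he, .refl⟩
  have hS0not : ∀ e ∈ Γ.edges, Γ.wEnd e = w → e ∉ E₀ → ¬ S0 (Γ.bEnd e) := by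
    rintro e he hwe hnE ⟨e₀, he₀, hreach⟩
    exact tree_sep Γ hTree (hE₀E he₀) he (fun h => hnE (h ▸ he₀)) (hE₀w e₀ he₀) hwe hreach
  have hS0step : ∀ u v, Γ.Adj u v → u ≠ w → v ≠ w → S0 v → S0 u := by
    rintro u v hadj hu hv ⟨e₀, he₀, hr⟩
    exact ⟨e₀, he₀, .head ⟨hadj, hu, hv⟩ hr⟩
  set gB1 : ℕ → Γ₁.Grp := fun e => if h : Γ₁.bEnd e ∈ Γ₁.blacks
    then (PresentedGroup.mk Γ₁.rels (FreeGroup.of ⟨Γ₁.bEnd e, h⟩)) ^ Γ₁.label e else 1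
    with hgB1
  have hrel1 : ∀ w' ∈ Γ₁.whites,
      (((Γ₁.edges.filter fun e => Γ₁.wEnd e = w').sort (· ≤ ·)).map gB1).prod = 1 := by
    intro w' hww'
    have h1 := relator_map Γ₁ (PresentedGroup.mk Γ₁.rels) w'
    have h2 := relator_one Γ₁ hww'
    rw [h1, ← hgB1] at h2
    exact h2
  have h2 := hrel1 w₂ hwmem₂
  rw [hfw₂, Finset.sort_singleton] at h2
  simp only [List.map_cons, List.map_nil, List.prod_cons, List.prod_nil, mul_one] at h2
  have hgenb : PresentedGroup.mk Γ₁.rels (FreeGroup.of ⟨b, hbB⟩) = 1 := by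
    simp only [hgB1, hbf2, hl2] at h2
    rw [dif_pos hbB, pow_one] at h2
    exact h2
  have hgB1f₀ : gB1 f₀ = 1 := by
    simp only [hgB1, hbf0, hl0]
    rw [dif_pos hbB, pow_one]
    exact hgenb
  have hgB1f₁ : gB1 f₁ = 1 := by
    simp only [hgB1, hbf1, hl1]
    rw [dif_pos hbB, pow_one]
    exact hgenb
  have hE₀prod : ((E₀.sort (· ≤ ·)).map gB1).prod = 1 := by
    have h0 := hrel1 w₀ hwmem₀
    rw [hfw₀, prod_sort_subset gB1 E₀ (insert f₀ E₀) (Finset.subset_insert _ _)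
      (fun e he hne => by
        rcases Finset.mem_insert.mp he with rfl | he2
        · exact hgB1f₀
        · exact absurd he2 hne)] at h0
    exact h0
  have hE₁prod :
      ((((Γ.edges.filter fun e => Γ.wEnd e = w) \ E₀).sort (· ≤ ·)).map gB1).prod = 1 := by
    have h0 := hrel1 w₁ hwmem₁
    rw [hfw₁, prod_sort_subset gB1 _ _ (Finset.subset_insert _ _)
      (fun e he hne => by
        rcases Finset.mem_insert.mp he with rfl | he2
        · exact hgB1f₁
        · exact absurd he2 hne)] at h0
    exact h0
  -- the two retraction homomorphisms
  set fA : {x // x ∈ Γ.blacks} → Γ₁.Grp := fun x =>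
    if S0 (x : ℕ) then PresentedGroup.mk Γ₁.rels (FreeGroup.of ⟨(x : ℕ), hsubB x.2⟩) else 1
    with hfA
  set fB : {x // x ∈ Γ.blacks} → Γ₁.Grp := fun x =>
    if S0 (x : ℕ) then 1 else PresentedGroup.mk Γ₁.rels (FreeGroup.of ⟨(x : ℕ), hsubB x.2⟩)
    with hfB
  set gA : ℕ → Γ₁.Grp := fun e => if h : Γ.bEnd e ∈ Γ.blacks
    then (fA ⟨Γ.bEnd e, h⟩) ^ Γ.label e else 1 with hgA
  set gBB : ℕ → Γ₁.Grp := fun e => if h : Γ.bEnd e ∈ Γ.blacks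
    then (fB ⟨Γ.bEnd e, h⟩) ^ Γ.label e else 1 with hgBB
  have hφrelA : ∀ w', (FreeGroup.lift fA) (Γ.relator w') =
      (((Γ.edges.filter fun e => Γ.wEnd e = w').sort (· ≤ ·)).map gA).prod := by
    intro w'
    rw [relator_map Γ (FreeGroup.lift fA) w']
    refine congrArg List.prod (List.map_congr_left fun e _ => ?_)
    by_cases h : Γ.bEnd e ∈ Γ.blacks
    · simp [h, hgA]
    · simp [h, hgA]
  have hφrelB : ∀ w', (FreeGroup.lift fB) (Γ.relator w') =
      (((Γ.edges.filter fun e => Γ.wEnd e = w').sort (· ≤ ·)).map gBB).prod := by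
    intro w'
    rw [relator_map Γ (FreeGroup.lift fB) w']
    refine congrArg List.prod (List.map_congr_left fun e _ => ?_)
    by_cases h : Γ.bEnd e ∈ Γ.blacks
    · simp [h, hgBB]
    · simp [h, hgBB]
  have hgAeq : ∀ e ∈ Γ.edges, S0 (Γ.bEnd e) → gA e = gB1 e := by
    intro e he hs
    have hb' : Γ.bEnd e ∈ Γ.blacks := Γ.bEnd_mem e he
    have hbe : Γ₁.bEnd e = Γ.bEnd e := (hold e he).1
    have hle : Γ₁.label e = Γ.label e := (hold e he).2
    simp only [hgA, hgB1, hbe, hle, hfA]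
    rw [dif_pos hb', dif_pos (hsubB hb'), if_pos hs]
  have hgAone : ∀ e ∈ Γ.edges, ¬ S0 (Γ.bEnd e) → gA e = 1 := by
    intro e he hs
    simp only [hgA, hfA]
    rw [dif_pos (Γ.bEnd_mem e he), if_neg hs, one_pow]
  have hgBeq : ∀ e ∈ Γ.edges, ¬ S0 (Γ.bEnd e) → gBB e = gB1 e := by
    intro e he hs
    have hb' : Γ.bEnd e ∈ Γ.blacks := Γ.bEnd_mem e he
    have hbe : Γ₁.bEnd e = Γ.bEnd e := (hold e he).1
    have hle : Γ₁.label e = Γ.label e := (hold e he).2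
    simp only [hgBB, hgB1, hbe, hle, hfB]
    rw [dif_pos hb', dif_pos (hsubB hb'), if_neg hs]
  have hgBone : ∀ e ∈ Γ.edges, S0 (Γ.bEnd e) → gBB e = 1 := by
    intro e he hs
    simp only [hgBB, hfB]
    rw [dif_pos (Γ.bEnd_mem e he), if_pos hs, one_pow]
  have hrelsA : ∀ r ∈ Γ.rels, (FreeGroup.lift fA) r = 1 := by
    rintro r ⟨w', hw', rfl⟩
    rw [hφrelA w']
    by_cases hww : w' = w
    · rw [hww]
      rw [prod_sort_subset gA E₀ (Γ.edges.filter fun e => Γ.wEnd e = w) hE₀sub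
        (fun e he hne => hgAone e (Finset.mem_filter.mp he).1
          (hS0not e (Finset.mem_filter.mp he).1 (Finset.mem_filter.mp he).2 hne))]
      rw [List.map_congr_left (fun e he => hgAeq e (hE₀E ((Finset.mem_sort _).mp he))
        (hS0mem e ((Finset.mem_sort _).mp he)))]
      exact hE₀prod
    · by_cases hall : ∀ e ∈ Γ.edges.filter (fun e => Γ.wEnd e = w'), ¬ S0 (Γ.bEnd e)
      · refine List.prod_eq_one fun x hx => ?_
        obtain ⟨e, he, rfl⟩ := List.mem_map.mp hx
        have he2 := (Finset.mem_sort _).mp he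
        exact hgAone e (Finset.mem_filter.mp he2).1 (hall e he2)
      · push_neg at hall
        obtain ⟨e', he', hs'⟩ := hall
        have he'f := Finset.mem_filter.mp he'
        have hallS : ∀ e ∈ Γ.edges.filter (fun e => Γ.wEnd e = w'), S0 (Γ.bEnd e) := by
          intro e he
          have hef := Finset.mem_filter.mp he
          have hbw : Γ.bEnd e ≠ w := hBW _ (Γ.bEnd_mem e hef.1)
          have hbw2 : Γ.bEnd e' ≠ w := hBW _ (Γ.bEnd_mem e' he'f.1)
          have hadj1 : Γ.Adj (Γ.bEnd e) w' := ⟨e, hef.1, Or.inl ⟨rfl, hef.2⟩⟩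
          have hadj2 : Γ.Adj w' (Γ.bEnd e') := Γ.adj_symm ⟨e', he'f.1, Or.inl ⟨rfl, he'f.2⟩⟩
          exact hS0step _ _ hadj1 hbw hww (hS0step _ _ hadj2 hww hbw2 hs')
        rw [List.map_congr_left (fun e he => hgAeq e
          (Finset.mem_filter.mp ((Finset.mem_sort _).mp he)).1
          (hallS e ((Finset.mem_sort _).mp he)))]
        rw [← hfold w' hw' hww]
        exact hrel1 w' (hwmemOld w' hw' hww)
  have hrelsB : ∀ r ∈ Γ.rels, (FreeGroup.lift fB) r = 1 := by
    rintro r ⟨w', hw', rfl⟩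
    rw [hφrelB w']
    by_cases hww : w' = w
    · rw [hww]
      rw [prod_sort_subset gBB ((Γ.edges.filter fun e => Γ.wEnd e = w) \ E₀) _
        Finset.sdiff_subset
        (fun e he hne => by
          have hef := Finset.mem_filter.mp he
          have heE : e ∈ E₀ := by
            by_contra hc
            exact hne (Finset.mem_sdiff.mpr ⟨he, hc⟩)
          exact hgBone e hef.1 (hS0mem e heE))]
      rw [List.map_congr_left (fun e he => by
        have hed := Finset.mem_sdiff.mp ((Finset.mem_sort _).mp he)
        have hef := Finset.mem_filter.mp hed.1
        exact hgBeq e hef.1 (hS0not e hef.1 hef.2 hed.2))]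
      exact hE₁prod
    · by_cases hall : ∀ e ∈ Γ.edges.filter (fun e => Γ.wEnd e = w'), S0 (Γ.bEnd e)
      · refine List.prod_eq_one fun x hx => ?_
        obtain ⟨e, he, rfl⟩ := List.mem_map.mp hx
        have he2 := (Finset.mem_sort _).mp he
        exact hgBone e (Finset.mem_filter.mp he2).1 (hall e he2)
      · push_neg at hall
        obtain ⟨e', he', hs'⟩ := hall
        have he'f := Finset.mem_filter.mp he'
        have hallN : ∀ e ∈ Γ.edges.filter (fun e => Γ.wEnd e = w'), ¬ S0 (Γ.bEnd e) := by
          intro e he hs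
          have hef := Finset.mem_filter.mp he
          have hbw : Γ.bEnd e ≠ w := hBW _ (Γ.bEnd_mem e hef.1)
          have hbw2 : Γ.bEnd e' ≠ w := hBW _ (Γ.bEnd_mem e' he'f.1)
          have hadj1 : Γ.Adj w' (Γ.bEnd e) := Γ.adj_symm ⟨e, hef.1, Or.inl ⟨rfl, hef.2⟩⟩
          have hadj2 : Γ.Adj (Γ.bEnd e') w' := ⟨e', he'f.1, Or.inl ⟨rfl, he'f.2⟩⟩
          exact hs' (hS0step _ _ hadj2 hbw2 hww (hS0step _ _ hadj1 hww hbw hs))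
        rw [List.map_congr_left (fun e he => hgBeq e
          (Finset.mem_filter.mp ((Finset.mem_sort _).mp he)).1
          (hallN e ((Finset.mem_sort _).mp he)))]
        rw [← hfold w' hw' hww]
        exact hrel1 w' (hwmemOld w' hw' hww)
  have hkill : ∀ (f : {x // x ∈ Γ.blacks} → Γ₁.Grp),
      (∀ r ∈ Γ.rels, (FreeGroup.lift f) r = 1) →
      ∀ z, (FreeGroup.lift f) z = 1 := by
    intro f hf z
    have h1 : PresentedGroup.mk Γ.rels z = 1 := hTriv _
    have hz : z ∈ Subgroup.normalClosure Γ.rels := (QuotientGroup.eq_one_iff z).mp h1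
    have hle : Subgroup.normalClosure Γ.rels ≤ (FreeGroup.lift f).ker :=
      Subgroup.normalClosure_le_normal (fun r hr => MonoidHom.mem_ker.mpr (hf r hr))
    exact MonoidHom.mem_ker.mp (hle hz)
  have hgenOld : ∀ (β : ℕ) (hβ : β ∈ Γ.blacks),
      PresentedGroup.mk Γ₁.rels (FreeGroup.of ⟨β, hsubB hβ⟩) = 1 := by
    intro β hβ
    by_cases hs : S0 β
    · have h := hkill fA hrelsA (FreeGroup.of ⟨β, hβ⟩)
      rw [FreeGroup.lift_apply_of] at h
      simp only [hfA] at h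
      rw [if_pos hs] at h
      exact h
    · have h := hkill fB hrelsB (FreeGroup.of ⟨β, hβ⟩)
      rw [FreeGroup.lift_apply_of] at h
      simp only [hfB] at h
      rw [if_neg hs] at h
      exact h
  have hofall : ∀ y : {x // x ∈ Γ₁.blacks},
      PresentedGroup.mk Γ₁.rels (FreeGroup.of y) = 1 := by
    rintro ⟨β, hβ⟩
    have hβ2 := hβ
    rw [hblacks] at hβ2
    rcases Finset.mem_insert.mp hβ2 with rfl | hmem
    · exact hgenb
    · exact hgenOld β hmem
  intro x
  induction x using PresentedGroup.induction_on with
  | _ z =>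
    refine FreeGroup.induction_on z ?_ ?_ ?_ ?_
    · exact map_one _
    · exact fun y => hofall y
    · intro y hy
      rw [map_inv, hy, inv_one]
    · intro a c ha hc
      rw [map_mul, ha, hc, one_mul]
end

section
/- Let Γ be a trivalent labeled graph with at least one black vertex that is a tree with all white vertices of genus 0, all terminal vertices white, and all edge labels equal to 1. Then Γ can be obtained from the b111-tree by a finite sequence of operations O1. -/
open Stratifold Stratifold.LGraph

section AuxLemmas

namespace Stratifold.LGraph

lemma mem_incident {G : LGraph} {v e : ℕ} :
    e ∈ G.IncidentEdges v ↔ e ∈ G.edges ∧ (G.bEnd e = v ∨ G.wEnd e = v) := by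
  simp [IncidentEdges]

lemma wEnd_ne_black {G : LGraph} {e b : ℕ} (he : e ∈ G.edges) (hb : b ∈ G.blacks) :
    G.wEnd e ≠ b :=
  fun h => Finset.disjoint_left.1 G.disj hb (h ▸ G.wEnd_mem e he)

lemma bEnd_ne_white {G : LGraph} {e v : ℕ} (he : e ∈ G.edges) (hv : v ∈ G.whites) :
    G.bEnd e ≠ v :=
  fun h => Finset.disjoint_left.1 G.disj (h ▸ G.bEnd_mem e he) hv

lemma incident_black {G : LGraph} {b : ℕ} (hb : b ∈ G.blacks) :
    G.IncidentEdges b = G.edges.filter fun e => G.bEnd e = b := by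
  ext e
  rw [mem_incident, Finset.mem_filter]
  constructor
  · rintro ⟨he, h | h⟩
    · exact ⟨he, h⟩
    · exact absurd h (wEnd_ne_black he hb)
  · rintro ⟨he, h⟩; exact ⟨he, Or.inl h⟩

lemma incident_white {G : LGraph} {v : ℕ} (hv : v ∈ G.whites) :
    G.IncidentEdges v = G.edges.filter fun e => G.wEnd e = v := by
  ext e
  rw [mem_incident, Finset.mem_filter]
  constructor
  · rintro ⟨he, h | h⟩
    · exact absurd h (bEnd_ne_white he hv)
    · exact ⟨he, h⟩
  · rintro ⟨he, h⟩; exact ⟨he, Or.inr h⟩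

lemma deg_black {G : LGraph} (hTri : G.Trivalent) (hLab : ∀ e ∈ G.edges, G.label e = 1)
    {b : ℕ} (hb : b ∈ G.blacks) : G.deg b = 3 := by
  have h := hTri b hb
  rw [Finset.sum_congr rfl (fun e he => hLab e (mem_incident.1 he).1)] at h
  simpa [deg, Finset.sum_const] using h

def ReachLen (G : LGraph) : ℕ → ℕ → ℕ → Prop
  | 0, u, v => u = v
  | n + 1, u, v => ∃ x, ReachLen G n u x ∧ G.Adj x v

lemma reach_exists_len {G : LGraph} {u v : ℕ} (h : G.Reach u v) :
    ∃ n, ReachLen G n u v := by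
  induction h with
  | refl => exact ⟨0, rfl⟩
  | tail _ hadj ih => obtain ⟨n, hn⟩ := ih; exact ⟨n + 1, _, hn, hadj⟩

lemma card_verts_le_of_connected {G : LGraph} (hc : G.Connected) :
    G.Verts.card ≤ G.edges.card + 1 := by
  classical
  obtain ⟨⟨r, hr⟩, hreach⟩ := hc
  have hex : ∀ v, v ∈ G.Verts → ∃ n, ReachLen G n r v := fun v hv =>
    reach_exists_len (hreach r hr v hv)
  set d : ℕ → ℕ := fun v => if h : ∃ n, ReachLen G n r v then Nat.find h else 0 with hd
  have key : ∀ v ∈ G.Verts.erase r, ∃ e, e ∈ G.edges ∧ ∃ x, d x < d v ∧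
      ((G.bEnd e = x ∧ G.wEnd e = v) ∨ (G.bEnd e = v ∧ G.wEnd e = x)) := by
    intro v hv
    obtain ⟨hvne, hvm⟩ := Finset.mem_erase.1 hv
    have h1 : ∃ n, ReachLen G n r v := hex v hvm
    have hspec : ReachLen G (Nat.find h1) r v := Nat.find_spec h1
    rcases hm : Nat.find h1 with _ | k
    · rw [hm] at hspec
      exact absurd hspec.symm hvne
    · rw [hm] at hspec
      obtain ⟨x, hx, e, he, hor⟩ := hspec
      have h2 : ∃ n, ReachLen G n r x := ⟨k, hx⟩
      refine ⟨e, he, x, ?_, hor⟩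
      have hle : d x ≤ k := by
        rw [hd]; simp only; rw [dif_pos h2]; exact Nat.find_min' h2 hx
      have hdv : d v = k + 1 := by
        rw [hd]; simp only; rw [dif_pos h1]; exact hm
      omega
  set F : ℕ → ℕ := fun v => if h : v ∈ G.Verts.erase r then (key v h).choose else 0 with hF
  have hmaps : ∀ v ∈ G.Verts.erase r, F v ∈ G.edges := by
    intro v hv
    rw [hF]; simp only; rw [dif_pos hv]
    exact (key v hv).choose_spec.1
  have hinj : Set.InjOn F (G.Verts.erase r) := by
    intro v hv v' hv' heq
    rw [Finset.mem_coe] at hv hv'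
    by_contra hne
    obtain ⟨he1, x, hdx, hor⟩ := (key v hv).choose_spec
    obtain ⟨he2, x', hdx', hor'⟩ := (key v' hv').choose_spec
    have heq' : (key v hv).choose = (key v' hv').choose := by
      have e1 : F v = (key v hv).choose := by rw [hF]; simp only; rw [dif_pos hv]
      have e2 : F v' = (key v' hv').choose := by rw [hF]; simp only; rw [dif_pos hv']
      rw [← e1, ← e2, heq]
    rw [heq'] at hor
    rcases hor with ⟨hb1, hw1⟩ | ⟨hb1, hw1⟩ <;> rcases hor' with ⟨hb2, hw2⟩ | ⟨hb2, hw2⟩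
    · exact hne (hw1.symm.trans hw2)
    · have hxv' : x = v' := hb1.symm.trans hb2
      have hx'v : x' = v := hw2.symm.trans hw1
      rw [hxv'] at hdx; rw [hx'v] at hdx'; omega
    · have hxv' : x = v' := hw1.symm.trans hw2
      have hx'v : x' = v := hb2.symm.trans hb1
      rw [hxv'] at hdx; rw [hx'v] at hdx'; omega
    · exact hne (hb1.symm.trans hb2)
  have hcard := Finset.card_le_card_of_injOn F hmaps hinj
  have herase := Finset.card_erase_add_one hr
  omega

lemma edges_card_eq {G : LGraph} (hTri : G.Trivalent)
    (hLab : ∀ e ∈ G.edges, G.label e = 1) :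
    G.edges.card = 3 * G.blacks.card := by
  rw [Finset.card_eq_sum_card_fiberwise G.bEnd_mem]
  have h : ∀ b ∈ G.blacks, (G.edges.filter fun e => G.bEnd e = b).card = 3 := by
    intro b hb
    rw [← incident_black hb]
    exact deg_black hTri hLab hb
  rw [Finset.sum_congr rfl h, Finset.sum_const, smul_eq_mul, mul_comm]

lemma sum_whites_deg {G : LGraph} :
    ∑ w ∈ G.whites, G.deg w = G.edges.card := by
  rw [Finset.card_eq_sum_card_fiberwise G.wEnd_mem]
  refine Finset.sum_congr rfl fun w hw => ?_
  rw [deg, incident_white hw]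

lemma white_wEnd {G : LGraph} (hBlack : G.blacks.Nonempty) (hconn : G.Connected)
    {v : ℕ} (hv : v ∈ G.whites) : ∃ e ∈ G.edges, G.wEnd e = v := by
  obtain ⟨b0, hb0⟩ := hBlack
  have hvb : v ≠ b0 := fun h => Finset.disjoint_left.1 G.disj hb0 (h ▸ hv)
  rcases (hconn.2 v (Finset.mem_union_right _ hv) b0 (Finset.mem_union_left _ hb0)).cases_head with
    h | ⟨c, ⟨e, he, hor⟩, _⟩
  · exact absurd h hvb
  · rcases hor with ⟨h1, _⟩ | ⟨_, h2⟩
    · exact absurd h1 (bEnd_ne_white he hv)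
    · exact ⟨e, he, h2⟩

lemma exists_leaf {G : LGraph} (hBlack : G.blacks.Nonempty) (hTri : G.Trivalent)
    (hTree : G.IsTree) (hLab : ∀ e ∈ G.edges, G.label e = 1) :
    ∃ w ∈ G.whites, G.deg w = 1 := by
  have hE := edges_card_eq hTri hLab
  have hV : G.Verts.card = G.blacks.card + G.whites.card :=
    Finset.card_union_of_disjoint G.disj
  have hT := hTree.2
  have hsum := sum_whites_deg (G := G)
  by_contra hno
  push_neg at hno
  have h2 : ∀ w ∈ G.whites, 2 ≤ G.deg w := by
    intro v hv
    have h1 : 1 ≤ G.deg v := by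
      obtain ⟨e, he, hwe⟩ := white_wEnd hBlack hTree.1 hv
      exact Finset.card_pos.2 ⟨e, mem_incident.2 ⟨he, Or.inr hwe⟩⟩
    have := hno v hv
    omega
  have hle := Finset.card_nsmul_le_sum G.whites G.deg 2 h2
  rw [smul_eq_mul, hsum] at hle
  omega

/-- The graph obtained by merging two white vertices (and deleting a black vertex and
a terminal white vertex together with all edges at the black vertex). -/
def shrink (Γ : LGraph) (b w0 w1 w2 w : ℕ) (hwb : w ∉ Γ.blacks) : LGraph where
  blacks := Γ.blacks.erase b
  whites := insert w (Γ.whites \ {w0, w1, w2})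
  edges := Γ.edges.filter fun e => Γ.bEnd e ≠ b ∧ Γ.wEnd e ≠ w2
  bEnd := Γ.bEnd
  wEnd := fun e => if Γ.wEnd e = w0 ∨ Γ.wEnd e = w1 then w else Γ.wEnd e
  label := Γ.label
  genus := fun v => if v = w then 0 else Γ.genus v
  disj := by
    rw [Finset.disjoint_left]
    intro a ha hmem
    have hab : a ∈ Γ.blacks := Finset.mem_of_mem_erase ha
    rcases Finset.mem_insert.1 hmem with h | h
    · exact hwb (h ▸ hab)
    · exact Finset.disjoint_left.1 Γ.disj hab (Finset.mem_sdiff.1 h).1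
  bEnd_mem := by
    intro e he
    rw [Finset.mem_filter] at he
    exact Finset.mem_erase.2 ⟨he.2.1, Γ.bEnd_mem e he.1⟩
  wEnd_mem := by
    intro e he
    rw [Finset.mem_filter] at he
    split_ifs with h
    · exact Finset.mem_insert_self _ _
    · push_neg at h
      refine Finset.mem_insert_of_mem (Finset.mem_sdiff.2 ⟨Γ.wEnd_mem e he.1, ?_⟩)
      simp only [Finset.mem_insert, Finset.mem_singleton]
      push_neg
      exact ⟨h.1, h.2, he.2.2⟩
  label_pos := fun e he => Γ.label_pos e (Finset.mem_filter.1 he).1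

end Stratifold.LGraph

end AuxLemmas

section MainAux

open Stratifold Stratifold.LGraph

set_option maxHeartbeats 1600000 in
theorem construct_aux : ∀ (n : ℕ) (Γ : LGraph), Γ.blacks.card ≤ n →
    Γ.blacks.Nonempty → Γ.Trivalent → Γ.IsTree → Γ.WhitesGenusZero →
    Γ.TerminalsWhite → (∀ e ∈ Γ.edges, Γ.label e = 1) →
    ∃ Γ₀ : LGraph, IsB111 Γ₀ ∧ Relation.ReflTransGen O1Step Γ₀ Γ := by
  intro n
  induction n with
  | zero =>
    intro Γ hle hBlack _ _ _ _ _
    have := Finset.card_pos.2 hBlack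
    omega
  | succ n ih =>
    intro Γ hle hBlack hTri hTree hGenus hTerm hLab
    classical
    -- a leaf white vertex
    obtain ⟨w2, hw2mem, hdw2⟩ := exists_leaf hBlack hTri hTree hLab
    obtain ⟨f2, hIw2⟩ := Finset.card_eq_one.1 hdw2
    have hf2I : f2 ∈ Γ.IncidentEdges w2 := by rw [hIw2]; exact Finset.mem_singleton_self f2
    have hf2e : f2 ∈ Γ.edges := (mem_incident.1 hf2I).1
    have hwf2 : Γ.wEnd f2 = w2 := by
      rcases (mem_incident.1 hf2I).2 with h | h
      · exact absurd h (bEnd_ne_white hf2e hw2mem)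
      · exact h
    set b := Γ.bEnd f2 with hbdef
    clear_value b
    have hbB : b ∈ Γ.blacks := by rw [hbdef]; exact Γ.bEnd_mem f2 hf2e
    have hdb : Γ.deg b = 3 := deg_black hTri hLab hbB
    have hf2Ib : f2 ∈ Γ.IncidentEdges b := mem_incident.2 ⟨hf2e, Or.inl hbdef.symm⟩
    have hcard2 : ((Γ.IncidentEdges b).erase f2).card = 2 := by
      rw [Finset.card_erase_of_mem hf2Ib]
      have : (Γ.IncidentEdges b).card = 3 := hdb
      omega
    obtain ⟨f0, f1, hf01, hpair⟩ := Finset.card_eq_two.1 hcard2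
    have hIbeq : Γ.IncidentEdges b = {f2, f0, f1} := by
      rw [← Finset.insert_erase hf2Ib, hpair]
    have hf0er : f0 ∈ (Γ.IncidentEdges b).erase f2 := by rw [hpair]; simp
    have hf1er : f1 ∈ (Γ.IncidentEdges b).erase f2 := by rw [hpair]; simp
    have hf02 : f0 ≠ f2 := Finset.ne_of_mem_erase hf0er
    have hf12 : f1 ≠ f2 := Finset.ne_of_mem_erase hf1er
    have hf0I : f0 ∈ Γ.IncidentEdges b := Finset.mem_of_mem_erase hf0er
    have hf1I : f1 ∈ Γ.IncidentEdges b := Finset.mem_of_mem_erase hf1er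
    have hf0e : f0 ∈ Γ.edges := (mem_incident.1 hf0I).1
    have hf1e : f1 ∈ Γ.edges := (mem_incident.1 hf1I).1
    have hbf0 : Γ.bEnd f0 = b := by
      rcases (mem_incident.1 hf0I).2 with h | h
      · exact h
      · exact absurd h (wEnd_ne_black hf0e hbB)
    have hbf1 : Γ.bEnd f1 = b := by
      rcases (mem_incident.1 hf1I).2 with h | h
      · exact h
      · exact absurd h (wEnd_ne_black hf1e hbB)
    set w0 := Γ.wEnd f0 with hw0def
    set w1 := Γ.wEnd f1 with hw1def
    clear_value w0 w1
    have hw0mem : w0 ∈ Γ.whites := by rw [hw0def]; exact Γ.wEnd_mem f0 hf0e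
    have hw1mem : w1 ∈ Γ.whites := by rw [hw1def]; exact Γ.wEnd_mem f1 hf1e
    have hw02 : w0 ≠ w2 := by
      intro h
      have : f0 ∈ Γ.IncidentEdges w2 := mem_incident.2 ⟨hf0e, Or.inr (by rw [← hw0def, h])⟩
      rw [hIw2, Finset.mem_singleton] at this
      exact hf02 this
    have hw12 : w1 ≠ w2 := by
      intro h
      have : f1 ∈ Γ.IncidentEdges w2 := mem_incident.2 ⟨hf1e, Or.inr (by rw [← hw1def, h])⟩
      rw [hIw2, Finset.mem_singleton] at this
      exact hf12 this
    have hbw0 : b ≠ w0 := fun h => Finset.disjoint_left.1 Γ.disj hbB (h ▸ hw0mem)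
    have hbw1 : b ≠ w1 := fun h => Finset.disjoint_left.1 Γ.disj hbB (h ▸ hw1mem)
    have hbw2 : b ≠ w2 := fun h => Finset.disjoint_left.1 Γ.disj hbB (h ▸ hw2mem)
    have hE := edges_card_eq hTri hLab
    have hV : Γ.Verts.card = Γ.blacks.card + Γ.whites.card :=
      Finset.card_union_of_disjoint Γ.disj
    have hT := hTree.2
    by_cases hc1 : Γ.blacks.card = 1
    -- BASE CASE : one black vertex
    · have hbl : Γ.blacks = {b} := by
        obtain ⟨a, ha⟩ := Finset.card_eq_one.1 hc1
        have : b = a := by rw [ha, Finset.mem_singleton] at hbB; exact hbB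
        rw [ha, this]
      have hIbE : Γ.IncidentEdges b = Γ.edges := by
        rw [incident_black hbB]
        apply Finset.filter_true_of_mem
        intro e he
        have := Γ.bEnd_mem e he
        rw [hbl, Finset.mem_singleton] at this
        exact this
      have hEdges : Γ.edges = {f2, f0, f1} := by rw [← hIbE, hIbeq]
      have hWcard : Γ.whites.card = 3 := by omega
      have hsub : Γ.whites ⊆ {w2, w0, w1} := by
        intro v hv
        obtain ⟨e, he, hwe⟩ := white_wEnd hBlack hTree.1 hv
        rw [hEdges] at he
        simp only [Finset.mem_insert, Finset.mem_singleton] at he ⊢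
        rcases he with rfl | rfl | rfl
        · exact Or.inl (hwe.symm.trans hwf2)
        · exact Or.inr (Or.inl (hwe.symm.trans hw0def.symm))
        · exact Or.inr (Or.inr (hwe.symm.trans hw1def.symm))
      have h3 : ({w2, w0, w1} : Finset ℕ).card ≤ 3 := by
        apply le_trans (Finset.card_insert_le _ _)
        have := Finset.card_insert_le w0 ({w1} : Finset ℕ)
        simp only [Finset.card_singleton] at this
        omega
      have hww : Γ.whites = {w2, w0, w1} :=
        Finset.eq_of_subset_of_card_le hsub (by omega)
      have hcard3 : ({w2, w0, w1} : Finset ℕ).card = 3 := by rw [← hww, hWcard]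
      have hw01 : w0 ≠ w1 := by
        intro h
        rw [h] at hcard3
        have h1 : ({w2, w1, w1} : Finset ℕ) = {w2, w1} := by
          simp
        rw [h1] at hcard3
        have := Finset.card_insert_le w2 ({w1} : Finset ℕ)
        simp only [Finset.card_singleton] at this
        omega
      refine ⟨Γ, ⟨b, w2, w0, w1, f2, f0, f1, hbl, hww, hw02.symm, hw12.symm, ?_, hEdges,
        hf02.symm, hf12.symm, hf01, hbdef.symm, hbf0, hbf1, hwf2, hw0def.symm, hw1def.symm,
        hLab f2 hf2e, hLab f0 hf0e, hLab f1 hf1e,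
        hGenus w2 hw2mem, hGenus w0 hw0mem, hGenus w1 hw1mem⟩,
        Relation.ReflTransGen.refl⟩
      exact hw01
    -- INDUCTIVE STEP
    · have hB2 : 2 ≤ Γ.blacks.card := by
        have := Finset.card_pos.2 hBlack
        omega
      -- no multi-edge at b : w0 ≠ w1
      have hw01 : w0 ≠ w1 := by
        intro hww
        let Γ'' : LGraph :=
          { blacks := Γ.blacks, whites := Γ.whites, edges := Γ.edges.erase f1
            bEnd := Γ.bEnd, wEnd := Γ.wEnd, label := Γ.label, genus := Γ.genus
            disj := Γ.disj
            bEnd_mem := fun e he => Γ.bEnd_mem e (Finset.mem_of_mem_erase he)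
            wEnd_mem := fun e he => Γ.wEnd_mem e (Finset.mem_of_mem_erase he)
            label_pos := fun e he => Γ.label_pos e (Finset.mem_of_mem_erase he) }
        have hadj : ∀ x y, Γ.Adj x y → Γ''.Adj x y := by
          rintro x y ⟨e, he, hor⟩
          by_cases hef : e = f1
          · rw [hef] at hor
            refine ⟨f0, Finset.mem_erase.2 ⟨hf01, hf0e⟩, ?_⟩
            have hbb : Γ.bEnd f0 = Γ.bEnd f1 := by rw [hbf0, hbf1]
            have hww' : Γ.wEnd f0 = Γ.wEnd f1 := by rw [← hw0def, ← hw1def, hww]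
            rcases hor with ⟨h1, h2⟩ | ⟨h1, h2⟩
            · exact Or.inl ⟨hbb.trans h1, hww'.trans h2⟩
            · exact Or.inr ⟨hbb.trans h1, hww'.trans h2⟩
          · exact ⟨e, Finset.mem_erase.2 ⟨hef, he⟩, hor⟩
        have hconn'' : Γ''.Connected := by
          refine ⟨hTree.1.1, fun u hu v hv => ?_⟩
          exact Relation.ReflTransGen.mono hadj _ _ (hTree.1.2 u hu v hv)
        have hle'' := card_verts_le_of_connected hconn''
        have h1 : Γ''.Verts.card = Γ.Verts.card := rfl
        have h2 : Γ''.edges.card = Γ.edges.card - 1 := Finset.card_erase_of_mem hf1e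
        have h4 : 0 < Γ.edges.card := Finset.card_pos.2 ⟨f1, hf1e⟩
        omega
      -- a fresh white vertex name
      set w := Γ.Verts.sup id + 1 with hwdef
      clear_value w
      have hwV : w ∉ Γ.Verts := by
        intro h
        have h2 := Finset.le_sup (f := id) h
        simp only [id] at h2
        omega
      have hwb : w ∉ Γ.blacks := fun h => hwV (Finset.mem_union_left _ h)
      have hwW : w ∉ Γ.whites := fun h => hwV (Finset.mem_union_right _ h)
      set Γ' := Γ.shrink b w0 w1 w2 w hwb with hΓ'def
      have hblacks' : Γ'.blacks = Γ.blacks.erase b := rfl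
      have hwhites' : Γ'.whites = insert w (Γ.whites \ {w0, w1, w2}) := rfl
      have hbEnd' : ∀ e, Γ'.bEnd e = Γ.bEnd e := fun _ => rfl
      have hwEnd' : ∀ e, Γ'.wEnd e =
          if Γ.wEnd e = w0 ∨ Γ.wEnd e = w1 then w else Γ.wEnd e := fun _ => rfl
      have hlabel' : ∀ e, Γ'.label e = Γ.label e := fun _ => rfl
      have hgenus' : ∀ v, Γ'.genus v = if v = w then 0 else Γ.genus v := fun _ => rfl
      have hEdges' : Γ'.edges = Γ.edges \ {f0, f1, f2} := by
        ext e
        show e ∈ Γ.edges.filter _ ↔ _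
        rw [Finset.mem_filter, Finset.mem_sdiff]
        simp only [Finset.mem_insert, Finset.mem_singleton]
        constructor
        · rintro ⟨he, hb', hw'⟩
          refine ⟨he, ?_⟩
          rintro (rfl | rfl | rfl)
          · exact hb' hbf0
          · exact hb' hbf1
          · exact hw' hwf2
        · rintro ⟨he, hne⟩
          push_neg at hne
          refine ⟨he, ?_, ?_⟩
          · intro hbe
            have hmem : e ∈ Γ.IncidentEdges b := mem_incident.2 ⟨he, Or.inl hbe⟩
            rw [hIbeq] at hmem
            simp only [Finset.mem_insert, Finset.mem_singleton] at hmem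
            tauto
          · intro hwe
            have hmem : e ∈ Γ.IncidentEdges w2 := mem_incident.2 ⟨he, Or.inr hwe⟩
            rw [hIw2, Finset.mem_singleton] at hmem
            exact hne.2.2 hmem
      clear_value Γ'
      have hw0V : w0 ∈ Γ.Verts := Finset.mem_union_right _ hw0mem
      have hw1V : w1 ∈ Γ.Verts := Finset.mem_union_right _ hw1mem
      have hw2V : w2 ∈ Γ.Verts := Finset.mem_union_right _ hw2mem
      have hbV : b ∈ Γ.Verts := Finset.mem_union_left _ hbB
      have hw0w : w0 ≠ w := fun h => hwV (h ▸ hw0V)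
      have hw1w : w1 ≠ w := fun h => hwV (h ▸ hw1V)
      have hw2w : w2 ≠ w := fun h => hwV (h ▸ hw2V)
      have hbw : b ≠ w := fun h => hwV (h ▸ hbV)
      have hVerts' : Γ'.Verts = insert w (Γ.Verts \ {b, w0, w1, w2}) := by
        ext v
        have hd1 : v ∈ Γ.blacks → v ≠ w0 ∧ v ≠ w1 ∧ v ≠ w2 := by
          intro hvb
          refine ⟨?_, ?_, ?_⟩ <;> rintro rfl
          · exact Finset.disjoint_left.1 Γ.disj hvb hw0mem
          · exact Finset.disjoint_left.1 Γ.disj hvb hw1mem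
          · exact Finset.disjoint_left.1 Γ.disj hvb hw2mem
        have hd2 : v ∈ Γ.whites → v ≠ b := fun hvw h =>
          Finset.disjoint_left.1 Γ.disj (h ▸ hbB) hvw
        simp only [Verts, hblacks', hwhites', Finset.mem_union, Finset.mem_erase,
          Finset.mem_insert, Finset.mem_sdiff, Finset.mem_singleton, not_or]
        constructor
        · rintro (⟨hne, hvb⟩ | rfl | ⟨hvw, h0, h1, h2⟩)
          · obtain ⟨h0, h1, h2⟩ := hd1 hvb
            exact Or.inr ⟨Or.inl hvb, hne, h0, h1, h2⟩
          · exact Or.inl rfl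
          · exact Or.inr ⟨Or.inr hvw, hd2 hvw, h0, h1, h2⟩
        · rintro (rfl | ⟨hvb | hvw, hb', h0, h1, h2⟩)
          · exact Or.inr (Or.inl rfl)
          · exact Or.inl ⟨hb', hvb⟩
          · exact Or.inr (Or.inr ⟨hvw, h0, h1, h2⟩)
      -- incident edges of surviving blacks are unchanged
      have hInc : ∀ b', b' ∈ Γ.blacks → b' ≠ b →
          Γ'.IncidentEdges b' = Γ.IncidentEdges b' := by
        intro b' hb'B hb'ne
        ext e
        rw [mem_incident, mem_incident]
        constructor
        · rintro ⟨he', hor⟩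
          have he : e ∈ Γ.edges := by
            rw [hEdges'] at he'
            exact (Finset.mem_sdiff.1 he').1
          refine ⟨he, ?_⟩
          rcases hor with h | h
          · exact Or.inl (by rw [hbEnd'] at h; exact h)
          · exfalso
            rw [hwEnd'] at h
            split_ifs at h with hcnd
            · exact hwb (h ▸ hb'B)
            · exact wEnd_ne_black he hb'B h
        · rintro ⟨he, hor⟩
          have hbe' : Γ.bEnd e = b' := by
            rcases hor with h | h
            · exact h
            · exact absurd h (wEnd_ne_black he hb'B)
          have he' : e ∈ Γ'.edges := by
            rw [hEdges', Finset.mem_sdiff]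
            refine ⟨he, ?_⟩
            simp only [Finset.mem_insert, Finset.mem_singleton]
            rintro (rfl | rfl | rfl)
            · exact hb'ne (hbe'.symm.trans hbf0)
            · exact hb'ne (hbe'.symm.trans hbf1)
            · exact hb'ne (hbe'.symm.trans hbdef.symm)
          exact ⟨he', Or.inl (by rw [hbEnd']; exact hbe')⟩
      -- connectivity of Γ'
      set φ : ℕ → ℕ := fun v => if v = b ∨ v = w0 ∨ v = w1 ∨ v = w2 then w else v with hφ
      have hφdef : ∀ v, φ v = if v = b ∨ v = w0 ∨ v = w1 ∨ v = w2 then w else v :=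
        fun v => by rw [hφ]
      clear_value φ
      have hφw0 : φ w0 = w := by rw [hφdef]; simp
      have hφw1 : φ w1 = w := by rw [hφdef]; simp
      have hφw2 : φ w2 = w := by rw [hφdef]; simp
      have hφb : φ b = w := by rw [hφdef]; simp
      have stepA : ∀ x y, Γ.Adj x y → Γ'.Reach (φ x) (φ y) := by
        rintro x y ⟨e, he, hor⟩
        by_cases hef : e = f0 ∨ e = f1 ∨ e = f2
        · have hends : φ (Γ.bEnd e) = w ∧ φ (Γ.wEnd e) = w := by
            rcases hef with rfl | rfl | rfl
            · rw [hbf0, ← hw0def]; exact ⟨hφb, hφw0⟩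
            · rw [hbf1, ← hw1def]; exact ⟨hφb, hφw1⟩
            · rw [← hbdef, hwf2]; exact ⟨hφb, hφw2⟩
          obtain ⟨h1, h2⟩ := hends
          rcases hor with ⟨hb', hw'⟩ | ⟨hb', hw'⟩
          · rw [← hb', ← hw', h1, h2]
            exact Relation.ReflTransGen.refl
          · rw [← hb', ← hw', h1, h2]
            exact Relation.ReflTransGen.refl
        · push_neg at hef
          obtain ⟨hn0, hn1, hn2⟩ := hef
          have he' : e ∈ Γ'.edges := by
            rw [hEdges', Finset.mem_sdiff]
            refine ⟨he, ?_⟩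
            simp only [Finset.mem_insert, Finset.mem_singleton]
            tauto
          have hbne : Γ.bEnd e ≠ b := by
            intro hh
            have hmem : e ∈ Γ.IncidentEdges b := mem_incident.2 ⟨he, Or.inl hh⟩
            rw [hIbeq] at hmem
            simp only [Finset.mem_insert, Finset.mem_singleton] at hmem
            tauto
          have hwne2 : Γ.wEnd e ≠ w2 := by
            intro hh
            have hmem : e ∈ Γ.IncidentEdges w2 := mem_incident.2 ⟨he, Or.inr hh⟩
            rw [hIw2, Finset.mem_singleton] at hmem
            exact hn2 hmem
          have hφbe : φ (Γ.bEnd e) = Γ'.bEnd e := by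
            rw [hbEnd', hφdef]
            have h0 : Γ.bEnd e ≠ w0 := bEnd_ne_white he hw0mem
            have h1 : Γ.bEnd e ≠ w1 := bEnd_ne_white he hw1mem
            have h2 : Γ.bEnd e ≠ w2 := bEnd_ne_white he hw2mem
            simp [hbne, h0, h1, h2]
          have hφwe : φ (Γ.wEnd e) = Γ'.wEnd e := by
            rw [hwEnd', hφdef]
            by_cases hcnd : Γ.wEnd e = w0 ∨ Γ.wEnd e = w1
            · rw [if_pos hcnd, if_pos (Or.inr (by tauto))]
            · have hwb' : Γ.wEnd e ≠ b := wEnd_ne_black he hbB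
              rw [if_neg hcnd, if_neg (by tauto)]
          refine Relation.ReflTransGen.single ⟨e, he', ?_⟩
          rcases hor with ⟨hb', hw'⟩ | ⟨hb', hw'⟩
          · exact Or.inl ⟨by rw [← hb']; exact hφbe.symm, by rw [← hw']; exact hφwe.symm⟩
          · exact Or.inr ⟨by rw [← hb']; exact hφbe.symm, by rw [← hw']; exact hφwe.symm⟩
      have reachlift : ∀ x y, Γ.Reach x y → Γ'.Reach (φ x) (φ y) := by
        intro x y h
        induction h with
        | refl => exact Relation.ReflTransGen.refl
        | tail _ hadj ih' => exact ih'.trans (stepA _ _ hadj)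
      have hconn' : Γ'.Connected := by
        constructor
        · exact ⟨w, by rw [hVerts']; exact Finset.mem_insert_self _ _⟩
        · intro u hu v hv
          have lift : ∀ z, z ∈ Γ'.Verts → ∃ z', z' ∈ Γ.Verts ∧ φ z' = z := by
            intro z hz
            rw [hVerts'] at hz
            rcases Finset.mem_insert.1 hz with rfl | hz'
            · exact ⟨w0, hw0V, hφw0⟩
            · obtain ⟨hzV, hzn⟩ := Finset.mem_sdiff.1 hz'
              refine ⟨z, hzV, ?_⟩
              simp only [Finset.mem_insert, Finset.mem_singleton] at hzn
              push_neg at hzn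
              rw [hφdef]
              simp [hzn.1, hzn.2.1, hzn.2.2.1, hzn.2.2.2]
          obtain ⟨u', hu'V, hu'⟩ := lift u hu
          obtain ⟨v', hv'V, hv'⟩ := lift v hv
          rw [← hu', ← hv']
          exact reachlift u' v' (hTree.1.2 u' hu'V v' hv'V)
      -- cardinalities
      have hcardf : ({f0, f1, f2} : Finset ℕ).card = 3 := by
        rw [Finset.card_insert_of_notMem (by simp [hf01, hf02]),
          Finset.card_insert_of_notMem (by simp [hf12]), Finset.card_singleton]
      have hsubf : ({f0, f1, f2} : Finset ℕ) ⊆ Γ.edges := by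
        intro e he
        simp only [Finset.mem_insert, Finset.mem_singleton] at he
        rcases he with rfl | rfl | rfl <;> assumption
      have hcardE' : Γ'.edges.card = Γ.edges.card - 3 := by
        rw [hEdges', Finset.card_sdiff_of_subset hsubf, hcardf]
      have hcardv4 : ({b, w0, w1, w2} : Finset ℕ).card = 4 := by
        rw [Finset.card_insert_of_notMem (by simp [hbw0, hbw1, hbw2]),
          Finset.card_insert_of_notMem (by simp [hw01, hw02]),
          Finset.card_insert_of_notMem (by simp [hw12]), Finset.card_singleton]
      have hsubv : ({b, w0, w1, w2} : Finset ℕ) ⊆ Γ.Verts := by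
        intro v hv
        simp only [Finset.mem_insert, Finset.mem_singleton] at hv
        rcases hv with rfl | rfl | rfl | rfl <;> assumption
      have hcardV' : Γ'.Verts.card = Γ.Verts.card - 3 := by
        rw [hVerts', Finset.card_insert_of_notMem
          (fun h => hwV (Finset.mem_sdiff.1 h).1),
          Finset.card_sdiff_of_subset hsubv, hcardv4]
        omega
      have hTree' : Γ'.IsTree := by
        refine ⟨hconn', ?_⟩
        rw [hcardE', hcardV']
        omega
      have hTri' : Γ'.Trivalent := by
        intro b' hb'
        rw [hblacks'] at hb'
        obtain ⟨hb'ne, hb'B⟩ := Finset.mem_erase.1 hb'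
        rw [hInc b' hb'B hb'ne]
        simp only [hlabel']
        exact hTri b' hb'B
      have hGenus' : Γ'.WhitesGenusZero := by
        intro v hv
        rw [hwhites'] at hv
        rcases Finset.mem_insert.1 hv with rfl | hv'
        · rw [hgenus', if_pos rfl]
        · have hvw : v ∈ Γ.whites := (Finset.mem_sdiff.1 hv').1
          have hvne : v ≠ w := fun h => hwW (h ▸ hvw)
          rw [hgenus', if_neg hvne]
          exact hGenus v hvw
      have hTerm' : Γ'.TerminalsWhite := by
        intro v hv
        rw [hblacks'] at hv
        obtain ⟨hvne, hvB⟩ := Finset.mem_erase.1 hv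
        have : Γ'.deg v = 3 := by
          show (Γ'.IncidentEdges v).card = 3
          rw [hInc v hvB hvne]
          exact deg_black hTri hLab hvB
        omega
      have hLab' : ∀ e ∈ Γ'.edges, Γ'.label e = 1 := by
        intro e he
        rw [hEdges'] at he
        rw [hlabel']
        exact hLab e (Finset.mem_sdiff.1 he).1
      have hBcard' : Γ'.blacks.card = Γ.blacks.card - 1 := by
        rw [hblacks', Finset.card_erase_of_mem hbB]
      have hBlack' : Γ'.blacks.Nonempty := by
        rw [← Finset.card_pos, hBcard']
        omega
      obtain ⟨Γ₀, hB111, hsteps⟩ := ih Γ' (by omega) hBlack' hTri' hTree' hGenus' hTerm' hLab'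
      -- the O1 step from Γ' to Γ
      have hO1 : O1At Γ' Γ w := by
        refine ⟨by rw [hwhites']; exact Finset.mem_insert_self _ _,
          Γ'.edges.filter (fun e => Γ.wEnd e = w0), w0, w1, w2, b, f0, f1, f2,
          ?_, ?_, ?_, ?_, ?_, hw01, hw02, hw12, hbw0, hbw1, hbw2, ?_, ?_, ?_,
          hf01, hf02, hf12, ?_, ?_, ?_, ?_, ?_, hbf0, hbf1, hbdef.symm,
          hw0def.symm, hw1def.symm, hwf2,
          hLab f0 hf0e, hLab f1 hf1e, hLab f2 hf2e, ?_,
          hGenus w0 hw0mem, hGenus w1 hw1mem, hGenus w2 hw2mem⟩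
        · intro e he
          obtain ⟨he', h0⟩ := Finset.mem_filter.1 he
          exact Finset.mem_filter.2 ⟨he', by rw [hwEnd', if_pos (Or.inl h0)]⟩
        · rw [hVerts']; simp [hw0w]
        · rw [hVerts']; simp [hw1w]
        · rw [hVerts']; simp [hw2w]
        · rw [hVerts']; simp [hbw]
        · rw [hEdges']; simp
        · rw [hEdges']; simp
        · rw [hEdges']; simp
        · rw [hblacks', Finset.insert_erase hbB]
        · -- whites
          rw [hwhites', Finset.erase_insert (fun h => hwW (Finset.mem_sdiff.1 h).1)]
          ext v
          simp only [Finset.mem_insert, Finset.mem_sdiff, Finset.mem_singleton, not_or]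
          constructor
          · intro hv
            by_cases h0 : v = w0
            · exact Or.inl h0
            by_cases h1 : v = w1
            · exact Or.inr (Or.inl h1)
            by_cases h2 : v = w2
            · exact Or.inr (Or.inr (Or.inl h2))
            · exact Or.inr (Or.inr (Or.inr ⟨hv, h0, h1, h2⟩))
          · rintro (rfl | rfl | rfl | ⟨hv, _⟩)
            · exact hw0mem
            · exact hw1mem
            · exact hw2mem
            · exact hv
        · -- edges
          rw [hEdges']
          ext e
          simp only [Finset.mem_insert, Finset.mem_sdiff, Finset.mem_singleton, not_or]
          constructor
          · intro he
            by_cases h0 : e = f0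
            · exact Or.inl h0
            by_cases h1 : e = f1
            · exact Or.inr (Or.inl h1)
            by_cases h2 : e = f2
            · exact Or.inr (Or.inr (Or.inl h2))
            · exact Or.inr (Or.inr (Or.inr ⟨he, h0, h1, h2⟩))
          · rintro (rfl | rfl | rfl | ⟨he, _⟩)
            · exact hf0e
            · exact hf1e
            · exact hf2e
            · exact he
        · exact fun e _ => ⟨(hbEnd' e).symm, (hlabel' e).symm⟩
        · -- wEnd formula
          intro e he
          have heE : e ∈ Γ.edges := by
            rw [hEdges'] at he
            exact (Finset.mem_sdiff.1 he).1
          by_cases h0 : Γ.wEnd e = w0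
          · have hW : Γ'.wEnd e = w := by rw [hwEnd', if_pos (Or.inl h0)]
            have hmem : e ∈ Γ'.edges.filter (fun e => Γ.wEnd e = w0) :=
              Finset.mem_filter.2 ⟨he, h0⟩
            rw [if_pos hW, if_pos hmem]
            exact h0
          by_cases h1 : Γ.wEnd e = w1
          · have hW : Γ'.wEnd e = w := by rw [hwEnd', if_pos (Or.inr h1)]
            have hnE : e ∉ Γ'.edges.filter (fun e => Γ.wEnd e = w0) := fun hmem =>
              h0 (Finset.mem_filter.1 hmem).2
            rw [if_pos hW, if_neg hnE]
            exact h1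
          · have hW : Γ'.wEnd e = Γ.wEnd e := by rw [hwEnd', if_neg (by tauto)]
            have hWne : ¬(Γ'.wEnd e = w) := by
              rw [hW]
              exact fun h => hwW (h ▸ Γ.wEnd_mem e heE)
            rw [if_neg hWne, hW]
        · -- genus preserved
          intro v hv
          obtain ⟨hvne, _⟩ := Finset.mem_erase.1 hv
          rw [hgenus', if_neg hvne]
      exact ⟨Γ₀, hB111, hsteps.tail ⟨w, hO1⟩⟩

end MainAux


/-- Let `Γ` be a trivalent labeled graph with at least one black vertex which is a tree
with all white vertices of genus `0`, all terminal vertices white, and all edge labels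
`1`.  Then `Γ` can be obtained from the `b111`-tree by a finite sequence of
operations `O1`. -/
theorem construct_from_b111 (Γ : LGraph) (hBlack : Γ.blacks.Nonempty)
    (hTri : Γ.Trivalent) (hTree : Γ.IsTree) (hGenus : Γ.WhitesGenusZero)
    (hTerm : Γ.TerminalsWhite) (hLab : ∀ e ∈ Γ.edges, Γ.label e = 1) :
    ∃ Γ₀ : LGraph, IsB111 Γ₀ ∧ Relation.ReflTransGen O1Step Γ₀ Γ := by
  exact construct_aux Γ.blacks.card Γ le_rfl hBlack hTri hTree hGenus hTerm hLab
end

section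
/- Let Γ be a trivalent labeled graph that is a tree with all white vertices of genus 0 and all edge labels equal to 1. Then the associated group G(Γ) is the trivial group. -/
open Stratifold Stratifold.LGraph


namespace StratifoldAux
open Stratifold Stratifold.LGraph

/-- `stepsTo Γ r n u`: `u` is reachable from `r` by a walk of length `n`. -/
def stepsTo (Γ : LGraph) (r : ℕ) : ℕ → ℕ → Prop
  | 0, u => u = r
  | n + 1, u => ∃ x, stepsTo Γ r n x ∧ Γ.Adj x u

lemma adj_symm {Γ : LGraph} {u v : ℕ} (h : Γ.Adj u v) : Γ.Adj v u := by
  obtain ⟨e, he, h | h⟩ := h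
  · exact ⟨e, he, Or.inr h⟩
  · exact ⟨e, he, Or.inl h⟩

lemma reach_steps {Γ : LGraph} {r u : ℕ} (h : Γ.Reach r u) : ∃ n, stepsTo Γ r n u := by
  induction h with
  | refl => exact ⟨0, rfl⟩
  | tail _ hadj ih => obtain ⟨n, hn⟩ := ih; exact ⟨n + 1, _, hn, hadj⟩

open Classical in
/-- The depth of `u`: the length of a shortest walk from the root `r`. -/
noncomputable def dep (Γ : LGraph) (r u : ℕ) : ℕ :=
  if h : ∃ n, stepsTo Γ r n u then Nat.find h else 0

variable {Γ : LGraph} {r : ℕ}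

lemma exists_steps (hconn : Γ.Connected) (hr : r ∈ Γ.Verts) {u : ℕ} (hu : u ∈ Γ.Verts) :
    ∃ n, stepsTo Γ r n u := reach_steps (hconn.2 r hr u hu)

lemma steps_dep {u : ℕ} (h : ∃ n, stepsTo Γ r n u) : stepsTo Γ r (dep Γ r u) u := by
  classical
  rw [dep, dif_pos h]
  exact Nat.find_spec h

lemma dep_le {n u : ℕ} (h : stepsTo Γ r n u) : dep Γ r u ≤ n := by
  classical
  rw [dep, dif_pos ⟨n, h⟩]
  exact Nat.find_le h

lemma dep_r : dep Γ r r = 0 := Nat.le_zero.1 (dep_le (show r = r from rfl))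

lemma eq_r_of_dep_eq_zero {u : ℕ} (h : ∃ n, stepsTo Γ r n u) (h0 : dep Γ r u = 0) : u = r := by
  have h1 : stepsTo Γ r 0 u := h0 ▸ steps_dep h
  exact h1

lemma steps_black_iff (hr : r ∈ Γ.whites) :
    ∀ n, ∀ u, stepsTo Γ r n u → (u ∈ Γ.blacks ↔ n % 2 = 1) := by
  intro n
  induction n with
  | zero =>
    intro u hu
    have hu' : u = r := hu
    subst hu'
    simp only [Nat.zero_mod]
    exact ⟨fun h => absurd h (Finset.disjoint_right.1 Γ.disj hr), fun h => by omega⟩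
  | succ n ih =>
    rintro u ⟨x, hx, e, he, ⟨hb, hw⟩ | ⟨hb, hw⟩⟩
    · -- bEnd e = x, wEnd e = u
      have hxb : x ∈ Γ.blacks := hb ▸ Γ.bEnd_mem e he
      have huw : u ∈ Γ.whites := hw ▸ Γ.wEnd_mem e he
      have h1 : n % 2 = 1 := (ih x hx).1 hxb
      have h2 : u ∉ Γ.blacks := Finset.disjoint_right.1 Γ.disj huw
      exact ⟨fun h => absurd h h2, fun h => by omega⟩
    · -- bEnd e = u, wEnd e = x
      have hub : u ∈ Γ.blacks := hb ▸ Γ.bEnd_mem e he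
      have hxw : x ∈ Γ.whites := hw ▸ Γ.wEnd_mem e he
      have h1 : ¬ (n % 2 = 1) := fun h =>
        Finset.disjoint_right.1 Γ.disj hxw ((ih x hx).2 h)
      exact ⟨fun _ => by omega, fun _ => hub⟩

lemma dep_black_iff (hconn : Γ.Connected) (hrw : r ∈ Γ.whites) {u : ℕ} (hu : u ∈ Γ.Verts) :
    (u ∈ Γ.blacks ↔ dep Γ r u % 2 = 1) :=
  steps_black_iff hrw _ u
    (steps_dep (exists_steps hconn (Finset.mem_union_right _ hrw) hu))

lemma dep_adj (hconn : Γ.Connected) (hrw : r ∈ Γ.whites) {e : ℕ} (he : e ∈ Γ.edges) :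
    dep Γ r (Γ.wEnd e) = dep Γ r (Γ.bEnd e) + 1 ∨
      dep Γ r (Γ.bEnd e) = dep Γ r (Γ.wEnd e) + 1 := by
  have hrV : r ∈ Γ.Verts := Finset.mem_union_right _ hrw
  have hu : Γ.bEnd e ∈ Γ.Verts := Finset.mem_union_left _ (Γ.bEnd_mem e he)
  have hv : Γ.wEnd e ∈ Γ.Verts := Finset.mem_union_right _ (Γ.wEnd_mem e he)
  have hadj : Γ.Adj (Γ.bEnd e) (Γ.wEnd e) := ⟨e, he, Or.inl ⟨rfl, rfl⟩⟩
  have h1 : dep Γ r (Γ.wEnd e) ≤ dep Γ r (Γ.bEnd e) + 1 :=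
    dep_le ⟨_, steps_dep (exists_steps hconn hrV hu), hadj⟩
  have h2 : dep Γ r (Γ.bEnd e) ≤ dep Γ r (Γ.wEnd e) + 1 :=
    dep_le ⟨_, steps_dep (exists_steps hconn hrV hv), adj_symm hadj⟩
  have hb := (dep_black_iff hconn hrw hu).1 (Γ.bEnd_mem e he)
  have hw : ¬ (dep Γ r (Γ.wEnd e) % 2 = 1) := fun hh =>
    Finset.disjoint_right.1 Γ.disj (Γ.wEnd_mem e he) ((dep_black_iff hconn hrw hv).2 hh)
  omega

open Classical in
/-- The edges at `u` whose other endpoint is closer to the root. -/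
noncomputable def downE (Γ : LGraph) (r u : ℕ) : Finset ℕ :=
  (Γ.IncidentEdges u).filter fun e =>
    (Γ.bEnd e = u ∧ dep Γ r (Γ.wEnd e) + 1 = dep Γ r u) ∨
    (Γ.wEnd e = u ∧ dep Γ r (Γ.bEnd e) + 1 = dep Γ r u)

lemma downE_subset {u : ℕ} : downE Γ r u ⊆ Γ.edges :=
  Finset.Subset.trans (Finset.filter_subset _ _) (Finset.filter_subset _ _)

lemma downE_nonempty (hconn : Γ.Connected) (hrw : r ∈ Γ.whites) {u : ℕ}
    (hu : u ∈ Γ.Verts) (hne : u ≠ r) : (downE Γ r u).Nonempty := by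
  have hrV : r ∈ Γ.Verts := Finset.mem_union_right _ hrw
  have hex := exists_steps hconn hrV hu
  have hd0 : dep Γ r u ≠ 0 := fun h0 => hne (eq_r_of_dep_eq_zero hex h0)
  obtain ⟨m, hm⟩ : ∃ m, dep Γ r u = m + 1 := ⟨dep Γ r u - 1, by omega⟩
  have hs := steps_dep hex
  rw [hm] at hs
  obtain ⟨x, hx, e, he, hcase⟩ := hs
  have hxle : dep Γ r x ≤ m := dep_le hx
  have hda := dep_adj hconn hrw he
  rcases hcase with ⟨hb, hw⟩ | ⟨hb, hw⟩
  · -- bEnd e = x, wEnd e = u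
    rw [hb, hw] at hda
    refine ⟨e, Finset.mem_filter.2 ⟨Finset.mem_filter.2 ⟨he, Or.inr hw⟩,
      Or.inr ⟨hw, ?_⟩⟩⟩
    rw [hb]; omega
  · -- bEnd e = u, wEnd e = x
    rw [hb, hw] at hda
    refine ⟨e, Finset.mem_filter.2 ⟨Finset.mem_filter.2 ⟨he, Or.inl hb⟩,
      Or.inl ⟨hb, ?_⟩⟩⟩
    rw [hw]; omega

lemma downE_eq_endpoint {u v e : ℕ} (hu : e ∈ downE Γ r u) (hv : e ∈ downE Γ r v) :
    u = v := by
  obtain ⟨-, h1⟩ := Finset.mem_filter.1 hu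
  obtain ⟨-, h2⟩ := Finset.mem_filter.1 hv
  rcases h1 with ⟨hb1, hd1⟩ | ⟨hw1, hd1⟩ <;> rcases h2 with ⟨hb2, hd2⟩ | ⟨hw2, hd2⟩
  · rw [← hb1, ← hb2]
  · exfalso; rw [← hb1] at hd1; rw [← hw2] at hd2; omega
  · exfalso; rw [← hw1] at hd1; rw [← hb2] at hd2; omega
  · rw [← hw1, ← hw2]

/-- A chosen down-edge at each vertex. -/
noncomputable def parentE (Γ : LGraph) (r u : ℕ) : ℕ :=
  if h : (downE Γ r u).Nonempty then h.choose else 0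

lemma parentE_mem {u : ℕ} (h : (downE Γ r u).Nonempty) :
    parentE Γ r u ∈ downE Γ r u := by
  rw [parentE, dif_pos h]; exact h.choose_spec

/-- In a tree, the down-edge at each non-root vertex is unique. -/
lemma downE_eq_parentE (hTree : Γ.IsTree) (hrw : r ∈ Γ.whites) {u e : ℕ}
    (hu : u ∈ Γ.Verts) (hur : u ≠ r) (he : e ∈ downE Γ r u) : e = parentE Γ r u := by
  have hconn := hTree.1
  have hrV : r ∈ Γ.Verts := Finset.mem_union_right _ hrw
  have hsurj := Finset.surj_on_of_inj_on_of_card_le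
    (s := Γ.Verts.erase r) (t := Γ.edges) (fun v _ => parentE Γ r v)
    (fun v hv => downE_subset (parentE_mem (downE_nonempty hconn hrw
      (Finset.mem_of_mem_erase hv) (Finset.ne_of_mem_erase hv))))
    (fun v1 v2 h1 h2 heq => by
      have m1 := parentE_mem (downE_nonempty hconn hrw
        (Finset.mem_of_mem_erase h1) (Finset.ne_of_mem_erase h1))
      have m2 := parentE_mem (downE_nonempty hconn hrw
        (Finset.mem_of_mem_erase h2) (Finset.ne_of_mem_erase h2))
      have heq' : parentE Γ r v1 = parentE Γ r v2 := heq
      rw [heq'] at m1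
      exact downE_eq_endpoint m1 m2)
    (by have hc := hTree.2; rw [Finset.card_erase_of_mem hrV]; omega)
  obtain ⟨v, hv, hveq0⟩ := hsurj e (downE_subset he)
  have hveq : e = parentE Γ r v := hveq0
  have mv := parentE_mem (downE_nonempty hconn hrw
    (Finset.mem_of_mem_erase hv) (Finset.ne_of_mem_erase hv))
  rw [← hveq] at mv
  rw [downE_eq_endpoint he mv]
  exact hveq

lemma black_up (hconn : Γ.Connected) (hrw : r ∈ Γ.whites) {b e : ℕ}
    (hb : b ∈ Γ.blacks) (he : e ∈ Γ.IncidentEdges b) (hnd : e ∉ downE Γ r b) :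
    dep Γ r (Γ.wEnd e) = dep Γ r b + 1 := by
  obtain ⟨hee, hcase⟩ := Finset.mem_filter.1 he
  have hbe : Γ.bEnd e = b := by
    rcases hcase with h | h
    · exact h
    · exact absurd (h ▸ Γ.wEnd_mem e hee) (Finset.disjoint_left.1 Γ.disj hb)
  have hadj := dep_adj hconn hrw hee
  rw [hbe] at hadj
  rcases hadj with h | h
  · exact h
  · exact absurd (Finset.mem_filter.2 ⟨he, Or.inl ⟨hbe, h.symm⟩⟩) hnd

lemma white_up (hconn : Γ.Connected) (hrw : r ∈ Γ.whites) {w e : ℕ}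
    (he : e ∈ Γ.edges) (hwe : Γ.wEnd e = w) (hnd : e ∉ downE Γ r w) :
    dep Γ r (Γ.bEnd e) = dep Γ r w + 1 := by
  have hadj := dep_adj hconn hrw he
  rw [hwe] at hadj
  rcases hadj with h | h
  · exact absurd (Finset.mem_filter.2 ⟨Finset.mem_filter.2 ⟨he, Or.inr hwe⟩,
      Or.inr ⟨hwe, h.symm⟩⟩) hnd
  · exact h

lemma deg_three {Γ : LGraph} (hTri : Γ.Trivalent) (hLab : ∀ e ∈ Γ.edges, Γ.label e = 1)
    {b : ℕ} (hb : b ∈ Γ.blacks) : (Γ.IncidentEdges b).card = 3 := by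
  have h := hTri b hb
  have h2 : (Γ.IncidentEdges b).card = ∑ e ∈ Γ.IncidentEdges b, Γ.label e := by
    rw [Finset.card_eq_sum_ones]
    exact Finset.sum_congr rfl (fun e he => (hLab e ((Finset.mem_filter.1 he).1)).symm)
  rw [h2, h]

lemma list_extract {G : Type*} [Group G] (N : Subgroup G) (f : ℕ → G) {l : List ℕ}
    (hnd : l.Nodup) {e₀ : ℕ} (h0 : e₀ ∈ l) (hp : (l.map f).prod ∈ N)
    (hrest : ∀ e ∈ l, e ≠ e₀ → f e ∈ N) : f e₀ ∈ N := by
  obtain ⟨l1, l2, rfl⟩ := List.append_of_mem h0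
  rw [List.nodup_append] at hnd
  obtain ⟨-, hnd2, hdisj⟩ := hnd
  have h01 : e₀ ∉ l1 := fun h => hdisj _ h _ List.mem_cons_self rfl
  have h02 : e₀ ∉ l2 := (List.nodup_cons.1 hnd2).1
  have h1 : (l1.map f).prod ∈ N := Subgroup.list_prod_mem _ (by
    intro x hx
    obtain ⟨e, he, rfl⟩ := List.mem_map.1 hx
    exact hrest e (List.mem_append_left _ he) (fun h => h01 (h ▸ he)))
  have h2 : (l2.map f).prod ∈ N := Subgroup.list_prod_mem _ (by
    intro x hx
    obtain ⟨e, he, rfl⟩ := List.mem_map.1 hx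
    exact hrest e (List.mem_append_right _ (List.mem_cons_of_mem _ he))
      (fun h => h02 (h ▸ he)))
  have key : f e₀ = (l1.map f).prod⁻¹ * (((l1 ++ e₀ :: l2).map f).prod) * (l2.map f).prod⁻¹ := by
    rw [List.map_append, List.prod_append, List.map_cons, List.prod_cons]
    group
  rw [key]
  exact mul_mem (mul_mem (inv_mem h1) hp) (inv_mem h2)

end StratifoldAux

open StratifoldAux

/-- Let `Γ` be a trivalent labeled graph which is a tree with all white vertices of
genus `0` and all edge labels `1`.  Then the associated group `G(Γ)` is trivial. -/
theorem labels_one_trivial_group (Γ : LGraph)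
    (hTri : Γ.Trivalent) (hTree : Γ.IsTree) (hGenus : Γ.WhitesGenusZero)
    (hLab : ∀ e ∈ Γ.edges, Γ.label e = 1) :
    ∀ x : Γ.Grp, x = 1 := by
  classical
  have hconn := hTree.1
  have hgen : ∀ (b : ℕ) (hb : b ∈ Γ.blacks),
      FreeGroup.of (⟨b, hb⟩ : {x // x ∈ Γ.blacks}) ∈ Subgroup.normalClosure Γ.rels := by
    intro b₀ hb₀
    have hdeg := deg_three hTri hLab hb₀
    obtain ⟨e', he'⟩ : (Γ.IncidentEdges b₀).Nonempty := by
      rw [← Finset.card_pos, hdeg]; norm_num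
    set r := Γ.wEnd e' with hrdef
    have hrw : r ∈ Γ.whites := Γ.wEnd_mem e' (Finset.mem_filter.1 he').1
    have hrV : r ∈ Γ.Verts := Finset.mem_union_right _ hrw
    have main : ∀ n, ∀ (b : ℕ) (hb : b ∈ Γ.blacks),
        Γ.blacks.sup (dep Γ r) ≤ dep Γ r b + n →
        FreeGroup.of (⟨b, hb⟩ : {x // x ∈ Γ.blacks}) ∈ Subgroup.normalClosure Γ.rels := by
      intro n
      induction n using Nat.strong_induction_on with
      | _ n ih =>
      intro b hb hbound
      have hbV : b ∈ Γ.Verts := Finset.mem_union_left _ hb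
      have hbr : b ≠ r := fun h => Finset.disjoint_left.1 Γ.disj hb (h ▸ hrw)
      have hdegb := deg_three hTri hLab hb
      obtain ⟨e₀, he₀, he₀nd⟩ : ∃ e₀ ∈ Γ.IncidentEdges b, e₀ ∉ downE Γ r b := by
        by_contra hcon
        push_neg at hcon
        have hs : Γ.IncidentEdges b ⊆ {parentE Γ r b} := fun e he =>
          Finset.mem_singleton.2 (downE_eq_parentE hTree hrw hbV hbr (hcon e he))
        have := Finset.card_le_card hs
        rw [hdegb, Finset.card_singleton] at this
        omega
      have he₀e : e₀ ∈ Γ.edges := (Finset.mem_filter.1 he₀).1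
      have hbe₀ : Γ.bEnd e₀ = b := by
        rcases (Finset.mem_filter.1 he₀).2 with h | h
        · exact h
        · exact absurd (h ▸ Γ.wEnd_mem e₀ he₀e) (Finset.disjoint_left.1 Γ.disj hb)
      set w := Γ.wEnd e₀ with hwdef
      have hww : w ∈ Γ.whites := Γ.wEnd_mem e₀ he₀e
      have hdw : dep Γ r w = dep Γ r b + 1 := black_up hconn hrw hb he₀ he₀nd
      have hwV : w ∈ Γ.Verts := Finset.mem_union_right _ hww
      have hwr : w ≠ r := by
        intro h
        rw [h, dep_r] at hdw
        omega
      have he₀dw : e₀ ∈ downE Γ r w :=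
        Finset.mem_filter.2 ⟨Finset.mem_filter.2 ⟨he₀e, Or.inr hwdef.symm⟩,
          Or.inr ⟨hwdef.symm, by rw [hbe₀]; omega⟩⟩
      have hrel : Γ.relator w ∈ Subgroup.normalClosure Γ.rels :=
        Subgroup.subset_normalClosure ⟨w, hww, rfl⟩
      set L := (Γ.edges.filter fun e => Γ.wEnd e = w).sort (· ≤ ·) with hL
      set f : ℕ → FreeGroup {x // x ∈ Γ.blacks} := fun e =>
        if h : Γ.bEnd e ∈ Γ.blacks then
          FreeGroup.of (⟨Γ.bEnd e, h⟩ : {x // x ∈ Γ.blacks}) ^ Γ.label e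
        else 1 with hf
      have hrel' : (L.map f).prod ∈ Subgroup.normalClosure Γ.rels := hrel
      have hfe₀ : f e₀ ∈ Subgroup.normalClosure Γ.rels := by
        have he₀L : e₀ ∈ L := by
          rw [hL]
          exact (Finset.mem_sort _).2 (Finset.mem_filter.2 ⟨he₀e, hwdef.symm⟩)
        apply list_extract _ f (hL ▸ Finset.sort_nodup _ _) he₀L hrel'
        intro e he hne
        rw [hL] at he
        obtain ⟨hee, hwe⟩ := Finset.mem_filter.1 ((Finset.mem_sort _).1 he)
        have hend : e ∉ downE Γ r w := fun hmem =>
          hne ((downE_eq_parentE hTree hrw hwV hwr hmem).trans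
            (downE_eq_parentE hTree hrw hwV hwr he₀dw).symm)
        have hdb' : dep Γ r (Γ.bEnd e) = dep Γ r w + 1 := white_up hconn hrw hee hwe hend
        have hb' : Γ.bEnd e ∈ Γ.blacks := Γ.bEnd_mem e hee
        have hsup : dep Γ r (Γ.bEnd e) ≤ Γ.blacks.sup (dep Γ r) := Finset.le_sup hb'
        rw [hf]
        simp only [dif_pos hb', hLab e hee, pow_one]
        rcases n with _ | m
        · exact absurd rfl (by omega : ¬ (0 : ℕ) = 0)
        · exact ih m (Nat.lt_succ_self m) _ hb' (by omega)
      have hval : f e₀ = FreeGroup.of (⟨b, hb⟩ : {x // x ∈ Γ.blacks}) := by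
        rw [hf]
        simp only [dif_pos (Γ.bEnd_mem e₀ he₀e), hLab e₀ he₀e, pow_one]
        congr 1
        exact Subtype.ext hbe₀
      rwa [hval] at hfe₀
    exact main (Γ.blacks.sup (dep Γ r)) b₀ hb₀ (Nat.le_add_left _ _)
  have hof : ∀ a : {x // x ∈ Γ.blacks}, (PresentedGroup.of a : Γ.Grp) = 1 := fun a =>
    (QuotientGroup.eq_one_iff _).2 (hgen a.1 a.2)
  intro x
  refine QuotientGroup.induction_on x ?_
  intro z
  induction z using FreeGroup.induction_on with
  | C1 => exact congrArg QuotientGroup.mk rfl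
  | of a => exact hof a
  | inv_of a ha =>
    have h : (QuotientGroup.mk ((FreeGroup.of a : FreeGroup {x // x ∈ Γ.blacks})⁻¹) : Γ.Grp) =
        (QuotientGroup.mk (FreeGroup.of a : FreeGroup {x // x ∈ Γ.blacks}) : Γ.Grp)⁻¹ := rfl
    rw [h, ha]; exact inv_one
  | mul a b ha hb =>
    have h : (QuotientGroup.mk (a * b) : Γ.Grp) =
        (QuotientGroup.mk a : Γ.Grp) * (QuotientGroup.mk b : Γ.Grp) := rfl
    rw [h, ha, hb]; exact one_mul _
end

section
/- Let Γ1 and Γ2 be disjoint labeled graphs, each a tree with all white vertices of genus 0, and let Γ = Γ1 ⊥ Γ2 be obtained from them by operation O1*. Then Γ is a tree with all white vertices of genus 0, and G(Γ) is isomorphic to the free product G(Γ1) * G(Γ2). -/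
open Stratifold Stratifold.LGraph

namespace O1starAux

theorem prod_map_filter {M : Type*} [Monoid M] (h : ℕ → M) (p : ℕ → Bool) :
    ∀ l : List ℕ, (∀ x ∈ l, ¬ p x → h x = 1) →
      ((l.filter p).map h).prod = (l.map h).prod := by
  intro l
  induction l with
  | nil => simp
  | cons a l ih =>
    intro H
    by_cases hp : p a
    · simp only [List.filter_cons, hp, if_true, List.map_cons, List.prod_cons,
        ih fun x hx hh => H x (List.mem_cons_of_mem a hx) hh]
    · rw [List.filter_cons, if_neg (by simpa using hp)]
      rw [ih fun x hx hh => H x (List.mem_cons_of_mem a hx) hh,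
        List.map_cons, List.prod_cons, H a List.mem_cons_self hp, one_mul]

theorem sort_filter_of_subset (s t : Finset ℕ) (hts : t ⊆ s) :
    (Finset.sort s (· ≤ ·)).filter (fun x => decide (x ∈ t)) = Finset.sort t (· ≤ ·) := by
  refine (fun hp h1 h2 => List.Perm.eq_of_pairwise' (r := (· ≤ ·)) h1 h2 hp) ?_ ?_ ?_
  · refine (List.perm_ext_iff_of_nodup ((Finset.sort_nodup s _).filter _)
      (Finset.sort_nodup t _)).2 ?_
    intro a
    simp only [List.mem_filter, Finset.mem_sort, decide_eq_true_eq]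
    exact ⟨fun h => h.2, fun h => ⟨hts h, h⟩⟩
  · exact (Finset.pairwise_sort s _).filter _
  · exact Finset.pairwise_sort t _

theorem prod_sort_insert {M : Type*} [Monoid M] (h : ℕ → M) (a : ℕ) (s : Finset ℕ)
    (ha : h a = 1) :
    ((Finset.sort (insert a s) (· ≤ ·)).map h).prod = ((Finset.sort s (· ≤ ·)).map h).prod := by
  rw [← sort_filter_of_subset (insert a s) s (Finset.subset_insert a s),
    prod_map_filter]
  intro x hx hxs
  rcases Finset.mem_insert.1 ((Finset.mem_sort _).1 hx) with h' | h'
  · rw [h', ha]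
  · exact absurd h' (by simpa using hxs)


open Stratifold Stratifold.LGraph in
theorem map_relator (G : LGraph) {H : Type*} [Group H]
    (F : FreeGroup {b : ℕ // b ∈ G.blacks} →* H) (w : ℕ) :
    F (G.relator w) =
      (((G.edges.filter fun e => G.wEnd e = w).sort (· ≤ ·)).map fun e =>
        if h : G.bEnd e ∈ G.blacks then F (FreeGroup.of ⟨G.bEnd e, h⟩) ^ G.label e
        else 1).prod := by
  rw [LGraph.relator, map_list_prod, List.map_map]
  congr 1
  apply List.map_congr_left
  intro e _
  by_cases h : G.bEnd e ∈ G.blacks <;> simp [h]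

open Stratifold Stratifold.LGraph in
theorem mk_relator_eq_one (G : LGraph) {w : ℕ} (hw : w ∈ G.whites) :
    PresentedGroup.mk G.rels (G.relator w) = 1 := by
  have h : G.relator w ∈ Subgroup.normalClosure G.rels :=
    Subgroup.subset_normalClosure ⟨w, hw, rfl⟩
  exact (QuotientGroup.eq_one_iff _).2 h

open Stratifold Stratifold.LGraph in
/-- The element of `G.Grp` contributed by an edge. -/
noncomputable def edgeEl (G : LGraph) : ℕ → G.Grp := fun e =>
  if h : e ∈ G.edges then
    (PresentedGroup.of ⟨G.bEnd e, G.bEnd_mem e h⟩ : G.Grp) ^ G.label e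
  else 1

open Stratifold Stratifold.LGraph in
theorem prod_sort_edgeEl (G : LGraph) {v : ℕ} (hv : v ∈ G.whites) :
    (((G.edges.filter fun e => G.wEnd e = v).sort (· ≤ ·)).map (edgeEl G)).prod = 1 := by
  have h := map_relator G (PresentedGroup.mk G.rels) v
  rw [mk_relator_eq_one G hv] at h
  have h2 : ((G.edges.filter fun e => G.wEnd e = v).sort (· ≤ ·)).map (edgeEl G)
      = ((G.edges.filter fun e => G.wEnd e = v).sort (· ≤ ·)).map fun e =>
        if hb : G.bEnd e ∈ G.blacks then
          (PresentedGroup.mk G.rels) (FreeGroup.of ⟨G.bEnd e, hb⟩) ^ G.label e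
        else 1 := by
    apply List.map_congr_left
    intro e he
    have he' : e ∈ G.edges := (Finset.mem_filter.1 ((Finset.mem_sort _).1 he)).1
    have hb := G.bEnd_mem e he'
    rw [edgeEl, dif_pos he', dif_pos hb]
    rfl
  rw [h2]
  exact h.symm

end O1starAux

set_option maxHeartbeats 2000000 in
/-- Let `Γ₁` and `Γ₂` be disjoint labeled graphs, each a tree with all white vertices
of genus `0`, and let `Γ = Γ₁ ⊥ Γ₂` be obtained from them by operation `O1*`.  Then
`Γ` is a tree with all white vertices of genus `0`, and `G(Γ)` is isomorphic to the
free product `G(Γ₁) ∗ G(Γ₂)`. -/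



theorem O1star_free_product (Γ₁ Γ₂ Γ : LGraph) (w₁ w₂ : ℕ)
    (hTree₁ : Γ₁.IsTree) (hGenus₁ : Γ₁.WhitesGenusZero)
    (hTree₂ : Γ₂.IsTree) (hGenus₂ : Γ₂.WhitesGenusZero)
    (hOp : O1StarAt Γ₁ Γ₂ Γ w₁ w₂) :
    Γ.IsTree ∧ Γ.WhitesGenusZero ∧
      Nonempty (Γ.Grp ≃* Monoid.Coprod Γ₁.Grp Γ₂.Grp) := by
  classical
  obtain ⟨⟨hDV, hDE⟩, hw₁, hw₂, b, w, f₀, f₁, f₂, hbV, hwV, hbw, hf₀, hf₁, hf₂,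
    h01, h02, h12, hBl, hWh, hEd, hE1, hE2, hb0, hw0, hl0, hb1, hw1', hl1,
    hb2, hw2', hl2, hg1, hg2, hgw⟩ := hOp
  -- basic membership helpers
  have memV1b : ∀ {x}, x ∈ Γ₁.blacks → x ∈ Γ₁.Verts := fun h => Finset.mem_union_left _ h
  have memV1w : ∀ {x}, x ∈ Γ₁.whites → x ∈ Γ₁.Verts := fun h => Finset.mem_union_right _ h
  have memV2b : ∀ {x}, x ∈ Γ₂.blacks → x ∈ Γ₂.Verts := fun h => Finset.mem_union_left _ h
  have memV2w : ∀ {x}, x ∈ Γ₂.whites → x ∈ Γ₂.Verts := fun h => Finset.mem_union_right _ h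
  have hV12 : ∀ {x}, x ∈ Γ₁.Verts → x ∉ Γ₂.Verts := fun h => Finset.disjoint_left.1 hDV h
  have hbB1 : b ∉ Γ₁.blacks := fun h => hbV (Finset.mem_union_left _ (memV1b h))
  have hbB2 : b ∉ Γ₂.blacks := fun h => hbV (Finset.mem_union_right _ (memV2b h))
  have hwW1 : w ∉ Γ₁.whites := fun h => hwV (Finset.mem_union_left _ (memV1w h))
  have hwW2 : w ∉ Γ₂.whites := fun h => hwV (Finset.mem_union_right _ (memV2w h))
  have hf0E1 : f₀ ∉ Γ₁.edges := fun h => hf₀ (Finset.mem_union_left _ h)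
  have hf0E2 : f₀ ∉ Γ₂.edges := fun h => hf₀ (Finset.mem_union_right _ h)
  have hf1E1 : f₁ ∉ Γ₁.edges := fun h => hf₁ (Finset.mem_union_left _ h)
  have hf1E2 : f₁ ∉ Γ₂.edges := fun h => hf₁ (Finset.mem_union_right _ h)
  have hf2E1 : f₂ ∉ Γ₁.edges := fun h => hf₂ (Finset.mem_union_left _ h)
  have hf2E2 : f₂ ∉ Γ₂.edges := fun h => hf₂ (Finset.mem_union_right _ h)
  have hE1sub : Γ₁.edges ⊆ Γ.edges := by
    rw [hEd]; intro e he
    exact Finset.mem_insert_of_mem (Finset.mem_insert_of_mem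
      (Finset.mem_insert_of_mem (Finset.mem_union_left _ he)))
  have hE2sub : Γ₂.edges ⊆ Γ.edges := by
    rw [hEd]; intro e he
    exact Finset.mem_insert_of_mem (Finset.mem_insert_of_mem
      (Finset.mem_insert_of_mem (Finset.mem_union_right _ he)))
  have hf0mem : f₀ ∈ Γ.edges := by rw [hEd]; exact Finset.mem_insert_self _ _
  have hf1mem : f₁ ∈ Γ.edges := by
    rw [hEd]; exact Finset.mem_insert_of_mem (Finset.mem_insert_self _ _)
  have hf2mem : f₂ ∈ Γ.edges := by
    rw [hEd]
    exact Finset.mem_insert_of_mem (Finset.mem_insert_of_mem (Finset.mem_insert_self _ _))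
  have hB1sub : Γ₁.blacks ⊆ Γ.blacks := by
    rw [hBl]; exact fun x hx => Finset.mem_insert_of_mem (Finset.mem_union_left _ hx)
  have hB2sub : Γ₂.blacks ⊆ Γ.blacks := by
    rw [hBl]; exact fun x hx => Finset.mem_insert_of_mem (Finset.mem_union_right _ hx)
  have hbB : b ∈ Γ.blacks := by rw [hBl]; exact Finset.mem_insert_self _ _
  have hW1sub : Γ₁.whites ⊆ Γ.whites := by
    rw [hWh]; exact fun x hx => Finset.mem_insert_of_mem (Finset.mem_union_left _ hx)
  have hW2sub : Γ₂.whites ⊆ Γ.whites := by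
    rw [hWh]; exact fun x hx => Finset.mem_insert_of_mem (Finset.mem_union_right _ hx)
  have hwW : w ∈ Γ.whites := by rw [hWh]; exact Finset.mem_insert_self _ _
  -- edge-case analysis of Γ.edges
  have hEdcase : ∀ e ∈ Γ.edges, e = f₀ ∨ e = f₁ ∨ e = f₂ ∨ e ∈ Γ₁.edges ∨ e ∈ Γ₂.edges := by
    intro e he
    rw [hEd] at he
    rcases Finset.mem_insert.1 he with h | he
    · exact Or.inl h
    rcases Finset.mem_insert.1 he with h | he
    · exact Or.inr (Or.inl h)
    rcases Finset.mem_insert.1 he with h | he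
    · exact Or.inr (Or.inr (Or.inl h))
    rcases Finset.mem_union.1 he with h | h
    · exact Or.inr (Or.inr (Or.inr (Or.inl h)))
    · exact Or.inr (Or.inr (Or.inr (Or.inr h)))
  -- the three filter computations
  have hfilter_w : Γ.edges.filter (fun e => Γ.wEnd e = w) = {f₂} := by
    ext e
    simp only [Finset.mem_filter, Finset.mem_singleton]
    constructor
    · rintro ⟨he, hwe⟩
      rcases hEdcase e he with rfl | rfl | rfl | he' | he'
      · rw [hw0] at hwe; exact absurd (hwe ▸ hw₁) hwW1
      · rw [hw1'] at hwe; exact absurd (hwe ▸ hw₂) hwW2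
      · rfl
      · rw [(hE1 e he').2.1] at hwe; exact absurd (hwe ▸ Γ₁.wEnd_mem e he') hwW1
      · rw [(hE2 e he').2.1] at hwe; exact absurd (hwe ▸ Γ₂.wEnd_mem e he') hwW2
    · rintro rfl
      exact ⟨hf2mem, hw2'⟩
  have hfilt1 : ∀ v ∈ Γ₁.whites, Γ.edges.filter (fun e => Γ.wEnd e = v) =
      if v = w₁ then insert f₀ (Γ₁.edges.filter fun e => Γ₁.wEnd e = v)
      else Γ₁.edges.filter fun e => Γ₁.wEnd e = v := by
    intro v hv
    have hvw2 : w₂ ≠ v := fun h => hV12 (memV1w (h ▸ hv)) (memV2w hw₂)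
    have hvw : w ≠ v := fun h => hwW1 (h ▸ hv)
    have hvE2 : ∀ e ∈ Γ₂.edges, Γ₂.wEnd e ≠ v :=
      fun e he h => hV12 (memV1w (h ▸ hv)) (memV2w (Γ₂.wEnd_mem e he))
    ext e
    simp only [Finset.mem_filter]
    by_cases hvw1 : v = w₁
    · subst hvw1
      rw [if_pos rfl]
      simp only [Finset.mem_insert, Finset.mem_filter]
      constructor
      · rintro ⟨he, hwe⟩
        rcases hEdcase e he with rfl | rfl | rfl | he' | he'
        · exact Or.inl rfl
        · rw [hw1'] at hwe; exact absurd hwe hvw2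
        · rw [hw2'] at hwe; exact absurd hwe hvw
        · exact Or.inr ⟨he', by rw [← (hE1 e he').2.1]; exact hwe⟩
        · rw [(hE2 e he').2.1] at hwe; exact absurd hwe (hvE2 e he')
      · rintro (rfl | ⟨he, hwe⟩)
        · exact ⟨hf0mem, hw0⟩
        · exact ⟨hE1sub he, by rw [(hE1 e he).2.1]; exact hwe⟩
    · rw [if_neg hvw1]
      simp only [Finset.mem_filter]
      constructor
      · rintro ⟨he, hwe⟩
        rcases hEdcase e he with rfl | rfl | rfl | he' | he'
        · rw [hw0] at hwe; exact absurd hwe.symm hvw1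
        · rw [hw1'] at hwe; exact absurd hwe hvw2
        · rw [hw2'] at hwe; exact absurd hwe hvw
        · exact ⟨he', by rw [← (hE1 e he').2.1]; exact hwe⟩
        · rw [(hE2 e he').2.1] at hwe; exact absurd hwe (hvE2 e he')
      · rintro ⟨he, hwe⟩
        exact ⟨hE1sub he, by rw [(hE1 e he).2.1]; exact hwe⟩
  have hfilt2 : ∀ v ∈ Γ₂.whites, Γ.edges.filter (fun e => Γ.wEnd e = v) =
      if v = w₂ then insert f₁ (Γ₂.edges.filter fun e => Γ₂.wEnd e = v)
      else Γ₂.edges.filter fun e => Γ₂.wEnd e = v := by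
    intro v hv
    have hvw1 : w₁ ≠ v := fun h => hV12 (memV1w hw₁) (memV2w (h ▸ hv))
    have hvw : w ≠ v := fun h => hwW2 (h ▸ hv)
    have hvE1 : ∀ e ∈ Γ₁.edges, Γ₁.wEnd e ≠ v :=
      fun e he h => hV12 (memV1w (Γ₁.wEnd_mem e he)) (memV2w (h ▸ hv))
    ext e
    simp only [Finset.mem_filter]
    by_cases hvw2 : v = w₂
    · subst hvw2
      rw [if_pos rfl]
      simp only [Finset.mem_insert, Finset.mem_filter]
      constructor
      · rintro ⟨he, hwe⟩
        rcases hEdcase e he with rfl | rfl | rfl | he' | he'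
        · rw [hw0] at hwe; exact absurd hwe hvw1
        · exact Or.inl rfl
        · rw [hw2'] at hwe; exact absurd hwe hvw
        · rw [(hE1 e he').2.1] at hwe; exact absurd hwe (hvE1 e he')
        · exact Or.inr ⟨he', by rw [← (hE2 e he').2.1]; exact hwe⟩
      · rintro (rfl | ⟨he, hwe⟩)
        · exact ⟨hf1mem, hw1'⟩
        · exact ⟨hE2sub he, by rw [(hE2 e he).2.1]; exact hwe⟩
    · rw [if_neg hvw2]
      simp only [Finset.mem_filter]
      constructor
      · rintro ⟨he, hwe⟩
        rcases hEdcase e he with rfl | rfl | rfl | he' | he'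
        · rw [hw0] at hwe; exact absurd hwe hvw1
        · rw [hw1'] at hwe; exact absurd hwe.symm hvw2
        · rw [hw2'] at hwe; exact absurd hwe hvw
        · rw [(hE1 e he').2.1] at hwe; exact absurd hwe (hvE1 e he')
        · exact ⟨he', by rw [← (hE2 e he').2.1]; exact hwe⟩
      · rintro ⟨he, hwe⟩
        exact ⟨hE2sub he, by rw [(hE2 e he).2.1]; exact hwe⟩
  -- the tree structure
  have hVerts : Γ.Verts = insert b (insert w (Γ₁.Verts ∪ Γ₂.Verts)) := by
    show Γ.blacks ∪ Γ.whites = _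
    rw [hBl, hWh]
    ext x
    simp only [Finset.mem_union, Finset.mem_insert, LGraph.Verts]
    tauto
  have hbni : b ∉ insert w (Γ₁.Verts ∪ Γ₂.Verts) := by
    simp only [Finset.mem_insert, Finset.mem_union, not_or]
    exact ⟨hbw, fun h => hbV (Finset.mem_union_left _ h),
      fun h => hbV (Finset.mem_union_right _ h)⟩
  have hwni : w ∉ Γ₁.Verts ∪ Γ₂.Verts := hwV
  have hVcard : Γ.Verts.card = Γ₁.Verts.card + Γ₂.Verts.card + 2 := by
    rw [hVerts, Finset.card_insert_of_notMem hbni, Finset.card_insert_of_notMem hwni,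
      Finset.card_union_of_disjoint hDV]
  have hEcard : Γ.edges.card = Γ₁.edges.card + Γ₂.edges.card + 3 := by
    have h2 : f₂ ∉ Γ₁.edges ∪ Γ₂.edges := hf₂
    have h1 : f₁ ∉ insert f₂ (Γ₁.edges ∪ Γ₂.edges) := by
      simp only [Finset.mem_insert, not_or]; exact ⟨h12, hf₁⟩
    have h0 : f₀ ∉ insert f₁ (insert f₂ (Γ₁.edges ∪ Γ₂.edges)) := by
      simp only [Finset.mem_insert, not_or]; exact ⟨h01, h02, hf₀⟩
    rw [hEd, Finset.card_insert_of_notMem h0, Finset.card_insert_of_notMem h1,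
      Finset.card_insert_of_notMem h2, Finset.card_union_of_disjoint hDE]
  -- connectivity
  have hAdjmono1 : ∀ u v', Γ₁.Adj u v' → Γ.Adj u v' := by
    rintro u v' ⟨e, he, h⟩
    refine ⟨e, hE1sub he, ?_⟩
    rcases h with ⟨ha, hb'⟩ | ⟨ha, hb'⟩
    · exact Or.inl ⟨(hE1 e he).1.trans ha, (hE1 e he).2.1.trans hb'⟩
    · exact Or.inr ⟨(hE1 e he).1.trans ha, (hE1 e he).2.1.trans hb'⟩
  have hAdjmono2 : ∀ u v', Γ₂.Adj u v' → Γ.Adj u v' := by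
    rintro u v' ⟨e, he, h⟩
    refine ⟨e, hE2sub he, ?_⟩
    rcases h with ⟨ha, hb'⟩ | ⟨ha, hb'⟩
    · exact Or.inl ⟨(hE2 e he).1.trans ha, (hE2 e he).2.1.trans hb'⟩
    · exact Or.inr ⟨(hE2 e he).1.trans ha, (hE2 e he).2.1.trans hb'⟩
  have hAdjw1b : Γ.Adj w₁ b := ⟨f₀, hf0mem, Or.inr ⟨hb0, hw0⟩⟩
  have hAdjw2b : Γ.Adj w₂ b := ⟨f₁, hf1mem, Or.inr ⟨hb1, hw1'⟩⟩
  have hAdjwb : Γ.Adj w b := ⟨f₂, hf2mem, Or.inr ⟨hb2, hw2'⟩⟩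
  have hreachb : ∀ v ∈ Γ.Verts, Γ.Reach v b := by
    intro v hv
    rw [hVerts] at hv
    rcases Finset.mem_insert.1 hv with rfl | hv
    · exact Relation.ReflTransGen.refl
    rcases Finset.mem_insert.1 hv with rfl | hv
    · exact Relation.ReflTransGen.single hAdjwb
    rcases Finset.mem_union.1 hv with hv | hv
    · exact Relation.ReflTransGen.tail
        (Relation.ReflTransGen.mono hAdjmono1 _ _ (hTree₁.1.2 v hv w₁ (memV1w hw₁))) hAdjw1b
    · exact Relation.ReflTransGen.tail
        (Relation.ReflTransGen.mono hAdjmono2 _ _ (hTree₂.1.2 v hv w₂ (memV2w hw₂))) hAdjw2b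
  have hsym : Symmetric Γ.Adj := by
    rintro u v' ⟨e, he, h⟩; exact ⟨e, he, h.symm⟩
  have hbmem : b ∈ Γ.Verts := Finset.mem_union_left _ hbB
  have hConn : Γ.Connected := by
    refine ⟨⟨b, hbmem⟩, fun u hu v hv => Relation.ReflTransGen.trans (hreachb u hu) ?_⟩
    exact (@Relation.ReflTransGen.stdSymm _ _ ⟨hsym⟩).symm _ _ (hreachb v hv)
  have hTree : Γ.IsTree := by
    refine ⟨hConn, ?_⟩
    have h1 := hTree₁.2
    have h2 := hTree₂.2
    omega
  have hGenus : Γ.WhitesGenusZero := by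
    intro v hv
    rw [hWh] at hv
    rcases Finset.mem_insert.1 hv with rfl | hv
    · exact hgw
    rcases Finset.mem_union.1 hv with hv | hv
    · rw [hg1 v hv]; exact hGenus₁ v hv
    · rw [hg2 v hv]; exact hGenus₂ v hv
  refine ⟨hTree, hGenus, ?_⟩
  -- the group isomorphism
  -- the generator b is trivial in Γ.Grp
  have hgenb : (PresentedGroup.of ⟨b, hbB⟩ : Γ.Grp) = 1 := by
    have h := O1starAux.prod_sort_edgeEl Γ hwW
    rw [hfilter_w, Finset.sort_singleton] at h
    simp only [List.map_cons, List.map_nil, List.prod_cons, List.prod_nil, mul_one] at h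
    rw [O1starAux.edgeEl, dif_pos hf2mem, hl2, pow_one] at h
    rw [← h]
    exact congrArg _ (Subtype.ext hb2.symm)
  have hedgeElf0 : O1starAux.edgeEl Γ f₀ = 1 := by
    rw [O1starAux.edgeEl, dif_pos hf0mem, hl0, pow_one, ← hgenb]
    exact congrArg _ (Subtype.ext hb0)
  have hedgeElf1 : O1starAux.edgeEl Γ f₁ = 1 := by
    rw [O1starAux.edgeEl, dif_pos hf1mem, hl1, pow_one, ← hgenb]
    exact congrArg _ (Subtype.ext hb1)
  -- for old edges, edgeEl of Γ restricted
  have hedge1 : ∀ e, ∀ he : e ∈ Γ₁.edges, O1starAux.edgeEl Γ e =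
      (PresentedGroup.of ⟨Γ₁.bEnd e, hB1sub (Γ₁.bEnd_mem e he)⟩ : Γ.Grp) ^
        Γ₁.label e := by
    intro e he
    rw [O1starAux.edgeEl, dif_pos (hE1sub he), (hE1 e he).2.2]
    congr 1
    exact congrArg _ (Subtype.ext (hE1 e he).1)
  have hedge2 : ∀ e, ∀ he : e ∈ Γ₂.edges, O1starAux.edgeEl Γ e =
      (PresentedGroup.of ⟨Γ₂.bEnd e, hB2sub (Γ₂.bEnd_mem e he)⟩ : Γ.Grp) ^
        Γ₂.label e := by
    intro e he
    rw [O1starAux.edgeEl, dif_pos (hE2sub he), (hE2 e he).2.2]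
    congr 1
    exact congrArg _ (Subtype.ext (hE2 e he).1)
  -- prod over Γ₁-filter of edgeEl Γ is 1
  have hprod1 : ∀ v ∈ Γ₁.whites,
      (((Γ₁.edges.filter fun e => Γ₁.wEnd e = v).sort (· ≤ ·)).map
        (O1starAux.edgeEl Γ)).prod = 1 := by
    intro v hv
    have h := O1starAux.prod_sort_edgeEl Γ (hW1sub hv)
    rw [hfilt1 v hv] at h
    by_cases hvw1 : v = w₁
    · rw [if_pos hvw1, O1starAux.prod_sort_insert _ _ _ hedgeElf0] at h
      exact h
    · rw [if_neg hvw1] at h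
      exact h
  have hprod2 : ∀ v ∈ Γ₂.whites,
      (((Γ₂.edges.filter fun e => Γ₂.wEnd e = v).sort (· ≤ ·)).map
        (O1starAux.edgeEl Γ)).prod = 1 := by
    intro v hv
    have h := O1starAux.prod_sort_edgeEl Γ (hW2sub hv)
    rw [hfilt2 v hv] at h
    by_cases hvw2 : v = w₂
    · rw [if_pos hvw2, O1starAux.prod_sort_insert _ _ _ hedgeElf1] at h
      exact h
    · rw [if_neg hvw2] at h
      exact h
  -- the homomorphism ψ₁ : Γ₁.Grp →* Γ.Grp
  have hg₁ker : ∀ r ∈ Γ₁.rels, FreeGroup.lift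
      (fun x : {x // x ∈ Γ₁.blacks} =>
        (PresentedGroup.of ⟨x.1, hB1sub x.2⟩ : Γ.Grp)) r = 1 := by
    rintro r ⟨v, hv, rfl⟩
    rw [O1starAux.map_relator]
    rw [← hprod1 v hv]
    apply congrArg
    apply List.map_congr_left
    intro e he
    have he1 : e ∈ Γ₁.edges := (Finset.mem_filter.1 ((Finset.mem_sort _).1 he)).1
    rw [dif_pos (Γ₁.bEnd_mem e he1), FreeGroup.lift_apply_of, hedge1 e he1]
  have hg₂ker : ∀ r ∈ Γ₂.rels, FreeGroup.lift
      (fun x : {x // x ∈ Γ₂.blacks} =>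
        (PresentedGroup.of ⟨x.1, hB2sub x.2⟩ : Γ.Grp)) r = 1 := by
    rintro r ⟨v, hv, rfl⟩
    rw [O1starAux.map_relator]
    rw [← hprod2 v hv]
    apply congrArg
    apply List.map_congr_left
    intro e he
    have he2 : e ∈ Γ₂.edges := (Finset.mem_filter.1 ((Finset.mem_sort _).1 he)).1
    rw [dif_pos (Γ₂.bEnd_mem e he2), FreeGroup.lift_apply_of, hedge2 e he2]
  set ψ₁ : Γ₁.Grp →* Γ.Grp := PresentedGroup.toGroup hg₁ker with hψ₁
  set ψ₂ : Γ₂.Grp →* Γ.Grp := PresentedGroup.toGroup hg₂ker with hψ₂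
  set ψ : Monoid.Coprod Γ₁.Grp Γ₂.Grp →* Γ.Grp := Monoid.Coprod.lift ψ₁ ψ₂ with hψ
  -- the homomorphism φ : Γ.Grp →* Coprod
  set fDef : {x // x ∈ Γ.blacks} → Monoid.Coprod Γ₁.Grp Γ₂.Grp := fun x =>
    if h : x.1 ∈ Γ₁.blacks then Monoid.Coprod.inl (PresentedGroup.of ⟨x.1, h⟩ : Γ₁.Grp)
    else if h2 : x.1 ∈ Γ₂.blacks then
      Monoid.Coprod.inr (PresentedGroup.of ⟨x.1, h2⟩ : Γ₂.Grp)
    else 1 with hfDef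
  have hfDefb : ∀ (h : b ∈ Γ.blacks), fDef ⟨b, h⟩ = 1 := by
    intro h
    rw [hfDef]
    simp only [dif_neg hbB1, dif_neg hbB2]
  have hfDef1 : ∀ (x : ℕ) (h : x ∈ Γ₁.blacks) (h' : x ∈ Γ.blacks),
      fDef ⟨x, h'⟩ = Monoid.Coprod.inl (PresentedGroup.of ⟨x, h⟩ : Γ₁.Grp) := by
    intro x h h'
    rw [hfDef]
    simp only [dif_pos h]
  have hfDef2 : ∀ (x : ℕ) (h : x ∈ Γ₂.blacks) (h' : x ∈ Γ.blacks),
      fDef ⟨x, h'⟩ = Monoid.Coprod.inr (PresentedGroup.of ⟨x, h⟩ : Γ₂.Grp) := by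
    intro x h h'
    have hn : x ∉ Γ₁.blacks := fun hc => hV12 (memV1b hc) (memV2b h)
    rw [hfDef]
    simp only [dif_neg hn, dif_pos h]
  have hker : ∀ r ∈ Γ.rels, FreeGroup.lift fDef r = 1 := by
    rintro r ⟨v, hv, rfl⟩
    rw [O1starAux.map_relator]
    rw [hWh] at hv
    rcases Finset.mem_insert.1 hv with rfl | hv
    · rw [hfilter_w, Finset.sort_singleton]
      simp only [List.map_cons, List.map_nil, List.prod_cons, List.prod_nil, mul_one]
      have hc : Γ.bEnd f₂ ∈ Γ.blacks := by rw [hb2]; exact hbB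
      rw [dif_pos hc, FreeGroup.lift_apply_of]
      have : (⟨Γ.bEnd f₂, hc⟩ : {x // x ∈ Γ.blacks}) = ⟨b, hbB⟩ := Subtype.ext hb2
      rw [this, hfDefb, one_pow]
    rcases Finset.mem_union.1 hv with hv | hv
    · -- v ∈ Γ₁.whites
      have hstep : ((Γ.edges.filter fun e => Γ.wEnd e = v).sort (· ≤ ·)).map
          (fun e => if h : Γ.bEnd e ∈ Γ.blacks then
            FreeGroup.lift fDef (FreeGroup.of ⟨Γ.bEnd e, h⟩) ^ Γ.label e else 1)
          = ((Γ.edges.filter fun e => Γ.wEnd e = v).sort (· ≤ ·)).map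
            (fun e => Monoid.Coprod.inl (O1starAux.edgeEl Γ₁ e)) := by
        apply List.map_congr_left
        intro e he
        have hm := Finset.mem_filter.1 ((Finset.mem_sort _).1 he)
        have hecase : e = f₀ ∨ e ∈ Γ₁.edges := by
          rcases hEdcase e hm.1 with rfl | rfl | rfl | h' | h'
          · exact Or.inl rfl
          · rw [hw1'] at hm
            exact absurd (hm.2 ▸ hw₂ : v ∈ Γ₂.whites)
              (fun hh => hV12 (memV1w hv) (memV2w hh))
          · rw [hw2'] at hm
            exact absurd (hm.2 ▸ hv : w ∈ Γ₁.whites) hwW1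
          · exact Or.inr h'
          · rw [(hE2 e h').2.1] at hm
            exact absurd (hm.2 ▸ Γ₂.wEnd_mem e h')
              (fun hh => hV12 (memV1w hv) (memV2w hh))
        rcases hecase with heq | he1
        · have hc : Γ.bEnd e ∈ Γ.blacks := by rw [heq, hb0]; exact hbB
          rw [dif_pos hc, FreeGroup.lift_apply_of]
          have h1 : (⟨Γ.bEnd e, hc⟩ : {x // x ∈ Γ.blacks}) = ⟨b, hbB⟩ :=
            Subtype.ext (show Γ.bEnd e = b by rw [heq, hb0])
          rw [h1, hfDefb, one_pow, heq, O1starAux.edgeEl, dif_neg hf0E1, map_one]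
        · have hbe : Γ₁.bEnd e ∈ Γ₁.blacks := Γ₁.bEnd_mem e he1
          have hc : Γ.bEnd e ∈ Γ.blacks := by rw [(hE1 e he1).1]; exact hB1sub hbe
          rw [dif_pos hc, FreeGroup.lift_apply_of]
          have h1 : (⟨Γ.bEnd e, hc⟩ : {x // x ∈ Γ.blacks}) =
              ⟨Γ₁.bEnd e, hB1sub hbe⟩ := Subtype.ext (hE1 e he1).1
          rw [h1, hfDef1 (Γ₁.bEnd e) hbe, O1starAux.edgeEl, dif_pos he1,
            (hE1 e he1).2.2, ← map_pow]
      rw [hstep]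
      have : (fun e => Monoid.Coprod.inl (O1starAux.edgeEl Γ₁ e)) =
          (Monoid.Coprod.inl (M := Γ₁.Grp) (N := Γ₂.Grp)) ∘ O1starAux.edgeEl Γ₁ := rfl
      rw [this, ← List.map_map, ← map_list_prod]
      have hgoal : (((Γ.edges.filter fun e => Γ.wEnd e = v).sort (· ≤ ·)).map
          (O1starAux.edgeEl Γ₁)).prod = 1 := by
        rw [hfilt1 v hv]
        by_cases hvw1 : v = w₁
        · rw [if_pos hvw1, O1starAux.prod_sort_insert _ _ _
            (by rw [O1starAux.edgeEl, dif_neg hf0E1])]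
          exact O1starAux.prod_sort_edgeEl Γ₁ hv
        · rw [if_neg hvw1]
          exact O1starAux.prod_sort_edgeEl Γ₁ hv
      rw [hgoal, map_one]
    · -- v ∈ Γ₂.whites
      have hstep : ((Γ.edges.filter fun e => Γ.wEnd e = v).sort (· ≤ ·)).map
          (fun e => if h : Γ.bEnd e ∈ Γ.blacks then
            FreeGroup.lift fDef (FreeGroup.of ⟨Γ.bEnd e, h⟩) ^ Γ.label e else 1)
          = ((Γ.edges.filter fun e => Γ.wEnd e = v).sort (· ≤ ·)).map
            (fun e => Monoid.Coprod.inr (O1starAux.edgeEl Γ₂ e)) := by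
        apply List.map_congr_left
        intro e he
        have hm := Finset.mem_filter.1 ((Finset.mem_sort _).1 he)
        have hecase : e = f₁ ∨ e ∈ Γ₂.edges := by
          rcases hEdcase e hm.1 with rfl | rfl | rfl | h' | h'
          · rw [hw0] at hm
            exact absurd (hm.2 ▸ hw₁ : v ∈ Γ₁.whites)
              (fun hh => hV12 (memV1w hh) (memV2w hv))
          · exact Or.inl rfl
          · rw [hw2'] at hm
            exact absurd (hm.2 ▸ hv : w ∈ Γ₂.whites) hwW2
          · rw [(hE1 e h').2.1] at hm
            exact absurd (hm.2 ▸ Γ₁.wEnd_mem e h')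
              (fun hh => hV12 (memV1w hh) (memV2w hv))
          · exact Or.inr h'
        rcases hecase with heq | he2
        · have hc : Γ.bEnd e ∈ Γ.blacks := by rw [heq, hb1]; exact hbB
          rw [dif_pos hc, FreeGroup.lift_apply_of]
          have h1 : (⟨Γ.bEnd e, hc⟩ : {x // x ∈ Γ.blacks}) = ⟨b, hbB⟩ :=
            Subtype.ext (show Γ.bEnd e = b by rw [heq, hb1])
          rw [h1, hfDefb, one_pow, heq, O1starAux.edgeEl, dif_neg hf1E2, map_one]
        · have hbe : Γ₂.bEnd e ∈ Γ₂.blacks := Γ₂.bEnd_mem e he2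
          have hc : Γ.bEnd e ∈ Γ.blacks := by rw [(hE2 e he2).1]; exact hB2sub hbe
          rw [dif_pos hc, FreeGroup.lift_apply_of]
          have h1 : (⟨Γ.bEnd e, hc⟩ : {x // x ∈ Γ.blacks}) =
              ⟨Γ₂.bEnd e, hB2sub hbe⟩ := Subtype.ext (hE2 e he2).1
          rw [h1, hfDef2 (Γ₂.bEnd e) hbe, O1starAux.edgeEl, dif_pos he2,
            (hE2 e he2).2.2, ← map_pow]
      rw [hstep]
      have : (fun e => Monoid.Coprod.inr (O1starAux.edgeEl Γ₂ e)) =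
          (Monoid.Coprod.inr (M := Γ₁.Grp) (N := Γ₂.Grp)) ∘ O1starAux.edgeEl Γ₂ := rfl
      rw [this, ← List.map_map, ← map_list_prod]
      have hgoal : (((Γ.edges.filter fun e => Γ.wEnd e = v).sort (· ≤ ·)).map
          (O1starAux.edgeEl Γ₂)).prod = 1 := by
        rw [hfilt2 v hv]
        by_cases hvw2 : v = w₂
        · rw [if_pos hvw2, O1starAux.prod_sort_insert _ _ _
            (by rw [O1starAux.edgeEl, dif_neg hf1E2])]
          exact O1starAux.prod_sort_edgeEl Γ₂ hv
        · rw [if_neg hvw2]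
          exact O1starAux.prod_sort_edgeEl Γ₂ hv
      rw [hgoal, map_one]
  set φ : Γ.Grp →* Monoid.Coprod Γ₁.Grp Γ₂.Grp := PresentedGroup.toGroup hker with hφ
  -- ψ ∘ φ = id
  have hψφ : ψ.comp φ = MonoidHom.id Γ.Grp := by
    apply PresentedGroup.ext
    rintro ⟨x, hx⟩
    rw [MonoidHom.comp_apply, MonoidHom.id_apply, hφ, PresentedGroup.toGroup.of]
    have hx' : x = b ∨ x ∈ Γ₁.blacks ∪ Γ₂.blacks := by
      rw [hBl] at hx; exact Finset.mem_insert.1 hx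
    rcases hx' with rfl | hx'
    · rw [hfDefb hx, map_one]
      exact hgenb.symm
    rcases Finset.mem_union.1 hx' with h1 | h2
    · rw [hfDef1 x h1 hx, hψ, Monoid.Coprod.lift_apply_inl, hψ₁, PresentedGroup.toGroup.of]
    · rw [hfDef2 x h2 hx, hψ, Monoid.Coprod.lift_apply_inr, hψ₂, PresentedGroup.toGroup.of]
  -- φ ∘ ψ = id
  have hφψ : φ.comp ψ = MonoidHom.id (Monoid.Coprod Γ₁.Grp Γ₂.Grp) := by
    apply Monoid.Coprod.hom_ext
    · apply PresentedGroup.ext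
      rintro ⟨x, hx⟩
      rw [MonoidHom.comp_apply, MonoidHom.comp_apply, MonoidHom.comp_apply,
        MonoidHom.id_apply, hψ, Monoid.Coprod.lift_apply_inl, hψ₁,
        PresentedGroup.toGroup.of, hφ, PresentedGroup.toGroup.of,
        hfDef1 x hx (hB1sub hx)]
    · apply PresentedGroup.ext
      rintro ⟨x, hx⟩
      rw [MonoidHom.comp_apply, MonoidHom.comp_apply, MonoidHom.comp_apply,
        MonoidHom.id_apply, hψ, Monoid.Coprod.lift_apply_inr, hψ₂,
        PresentedGroup.toGroup.of, hφ, PresentedGroup.toGroup.of,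
        hfDef2 x hx (hB2sub hx)]
  exact ⟨MonoidHom.toMulEquiv φ ψ hψφ hφψ⟩
end
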